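/- arXiv:2308.12165 — 8 statements merged into one kernel-verified Lean document; each statement's English description precedes it below -/
import Mathlib

section
/- If d_X and d_Y are metrics (not merely pseudometrics), then d_{G,A} is a metric on the set of attributed simple graphs up to relabeling: if d_{G,A}(([m],v,e),([n],w,f)) = 0 then m = n and there exists a permutation π ∈ S_n with v_i = w_{π(i)} and e_{ii'} = f_{π(i)π(i')} for all i,i' ∈ [n]. -/
open Finset

section GraphMetricDefs

variable {X Y : Type*}

/-- Two attributed graphs `([m],v,e)` and `([n],w,f)` are equal (i.e. agree up to
relabeling of the vertices). -/
def GraphEqual {m n : ℕ} (v : Fin m → X) (e : Fin m → Fin m → Y)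
    (w : Fin n → X) (f : Fin n → Fin n → Y) : Prop :=
  ∃ h : m = n, ∃ π : Equiv.Perm (Fin n),
    (∀ i : Fin m, v i = w (π (Fin.cast h i))) ∧
    (∀ i i' : Fin m, e i i' = f (π (Fin.cast h i)) (π (Fin.cast h i')))

/-- `e` is a valid edge-attribute map: symmetric with no-edge value `y₀` on the diagonal. -/
def IsGraph {m : ℕ} (y₀ : Y) (e : Fin m → Fin m → Y) : Prop :=
  (∀ i i', e i i' = e i' i) ∧ ∀ i, e i i = y₀

variable [PseudoMetricSpace X] [PseudoMetricSpace Y]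

/-- The expression in brackets (raised to power `1/p`) in the definition of the GTT
distance, for a given subset `I ⊆ [m]` and a permutation `π ∈ S_n`. -/
noncomputable def gttVal (y₀ : Y) (p C : ℝ) {m n : ℕ} (hmn : m ≤ n)
    (v : Fin m → X) (e : Fin m → Fin m → Y)
    (w : Fin n → X) (f : Fin n → Fin n → Y)
    (I : Finset (Fin m)) (π : Equiv.Perm (Fin n)) : ℝ :=
  (((m : ℝ) + (n : ℝ) - 2 * (I.card : ℝ)) * C ^ p
    + ∑ i ∈ I, dist (v i) (w (π (Fin.castLE hmn i))) ^ p
    + (1/2) * ∑ i ∈ I, ∑ i' ∈ I,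
        dist (e i i') (f (π (Fin.castLE hmn i)) (π (Fin.castLE hmn i'))) ^ p
    + (1/2) * ∑ q ∈ ((univ : Finset (Fin m × Fin m)) \ I ×ˢ I),
        dist (e q.1 q.2) y₀ ^ p
    + (1/2) * ∑ q ∈ ((univ : Finset (Fin n × Fin n)) \
        ((I.image fun i => π (Fin.castLE hmn i)) ×ˢ (I.image fun i => π (Fin.castLE hmn i)))),
        dist y₀ (f q.1 q.2) ^ p) ^ (1/p)

/-- The graph transport-transform (GTT) distance of order `p` with vertex penalty `C`
between `([m],v,e)` and `([n],w,f)`, for `m ≤ n`. -/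
noncomputable def dGTT (y₀ : Y) (p C : ℝ) {m n : ℕ} (hmn : m ≤ n)
    (v : Fin m → X) (e : Fin m → Fin m → Y)
    (w : Fin n → X) (f : Fin n → Fin n → Y) : ℝ :=
  Finset.inf' Finset.univ Finset.univ_nonempty
    fun Iπ : Finset (Fin m) × Equiv.Perm (Fin n) => gttVal y₀ p C hmn v e w f Iπ.1 Iπ.2

/-- The GTT distance between two graphs of arbitrary sizes (extended by symmetry). -/
noncomputable def dGTT' (y₀ : Y) (p C : ℝ) {m n : ℕ}
    (v : Fin m → X) (e : Fin m → Fin m → Y)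
    (w : Fin n → X) (f : Fin n → Fin n → Y) : ℝ :=
  if h : m ≤ n then dGTT y₀ p C h v e w f else dGTT y₀ p C (le_of_not_ge h) w f v e

/-- The GOSPA1 distance of order `p` with penalties `C₁` (vertex) and `CY` (edge bound)
between `([m],v,e)` and `([n],w,f)`, for `m ≤ n`. -/
noncomputable def dGOSPA1 (p C₁ CY : ℝ) {m n : ℕ} (hmn : m ≤ n)
    (v : Fin m → X) (e : Fin m → Fin m → Y)
    (w : Fin n → X) (f : Fin n → Fin n → Y) : ℝ :=
  ((n : ℝ) ^ (1/p))⁻¹ *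
    Finset.inf' Finset.univ Finset.univ_nonempty fun π : Equiv.Perm (Fin n) =>
      (((n : ℝ) - (m : ℝ)) * C₁ ^ p
        + ∑ i : Fin m, dist (v i) (w (π (Fin.castLE hmn i))) ^ p
        + (1/2) * ((n : ℝ) - 1)⁻¹ *
            ∑ i : Fin m, ((∑ i' : Fin m,
                dist (e i i') (f (π (Fin.castLE hmn i)) (π (Fin.castLE hmn i'))) ^ p)
              + ((n : ℝ) - (m : ℝ)) * CY ^ p)) ^ (1/p)

/-- The GOSPA1 distance between two graphs of arbitrary sizes (extended by symmetry). -/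
noncomputable def dGOSPA1' (p C₁ CY : ℝ) {m n : ℕ}
    (v : Fin m → X) (e : Fin m → Fin m → Y)
    (w : Fin n → X) (f : Fin n → Fin n → Y) : ℝ :=
  if h : m ≤ n then dGOSPA1 p C₁ CY h v e w f
  else dGOSPA1 p C₁ CY (le_of_not_ge h) w f v e

/-- The GOSPA2 distance of order `p` with penalty `C₂`
between `([m],v,e)` and `([n],w,f)`, for `m ≤ n`. -/
noncomputable def dGOSPA2 (y₀ : Y) (p C₂ : ℝ) {m n : ℕ} (hmn : m ≤ n)
    (v : Fin m → X) (e : Fin m → Fin m → Y)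
    (w : Fin n → X) (f : Fin n → Fin n → Y) : ℝ :=
  ((n : ℝ) ^ (1/p))⁻¹ *
    Finset.inf' Finset.univ Finset.univ_nonempty fun π : Equiv.Perm (Fin n) =>
      (((n : ℝ) - (m : ℝ)) * C₂ ^ p
        + ∑ i : Fin m, dist (v i) (w (π (Fin.castLE hmn i))) ^ p
        + (1/2) * ((n : ℝ) - 1)⁻¹ *
            ∑ i : Fin n, ∑ i' : Fin n,
              (if h : (i : ℕ) < m ∧ (i' : ℕ) < m
               then dist (e ⟨i.1, h.1⟩ ⟨i'.1, h.2⟩) (f (π i) (π i')) ^ p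
               else dist y₀ (f (π i) (π i')) ^ p)) ^ (1/p)

/-- The GOSPA2 distance between two graphs of arbitrary sizes (extended by symmetry). -/
noncomputable def dGOSPA2' (y₀ : Y) (p C₂ : ℝ) {m n : ℕ}
    (v : Fin m → X) (e : Fin m → Fin m → Y)
    (w : Fin n → X) (f : Fin n → Fin n → Y) : ℝ :=
  if h : m ≤ n then dGOSPA2 y₀ p C₂ h v e w f
  else dGOSPA2 y₀ p C₂ (le_of_not_ge h) w f v e

end GraphMetricDefs

/-- Theorem: if `d_X` and `d_Y` are metrics, then the GTT distance
separates graphs up to relabeling: vanishing GTT distance implies the graphs are equal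
up to a permutation of the vertex set. -/
theorem dGTT_eq_zero_implies_graphEqual
    {X Y : Type*} [MetricSpace X] [MetricSpace Y]
    (y₀ : Y) (p C : ℝ) (hp : 1 ≤ p) (hC : 0 < C)
    {m n : ℕ} (hmn : m ≤ n)
    (v : Fin m → X) (e : Fin m → Fin m → Y)
    (w : Fin n → X) (f : Fin n → Fin n → Y)
    (he : IsGraph y₀ e) (hf : IsGraph y₀ f)
    (h0 : dGTT y₀ p C hmn v e w f = 0) :
    ∃ h : m = n, ∃ π : Equiv.Perm (Fin n),
      (∀ i : Fin m, v i = w (π (Fin.cast h i))) ∧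
      (∀ i i' : Fin m, e i i' = f (π (Fin.cast h i)) (π (Fin.cast h i'))) := by
  -- The infimum is attained at some (I, π)
  obtain ⟨⟨I, π⟩, -, hval⟩ := Finset.exists_mem_eq_inf' (Finset.univ_nonempty)
    (fun Iπ : Finset (Fin m) × Equiv.Perm (Fin n) => gttVal y₀ p C hmn v e w f Iπ.1 Iπ.2)
  rw [dGTT] at h0
  rw [h0] at hval
  have hp0 : (0:ℝ) < p := lt_of_lt_of_le one_pos hp
  have hip : (1/p : ℝ) ≠ 0 := by positivity
  -- Names for the five terms
  set T1 : ℝ := ((m : ℝ) + (n : ℝ) - 2 * (I.card : ℝ)) * C ^ p with hT1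
  set T2 : ℝ := ∑ i ∈ I, dist (v i) (w (π (Fin.castLE hmn i))) ^ p with hT2
  set T3 : ℝ := (1/2) * ∑ i ∈ I, ∑ i' ∈ I,
      dist (e i i') (f (π (Fin.castLE hmn i)) (π (Fin.castLE hmn i'))) ^ p with hT3
  set T4 : ℝ := (1/2) * ∑ q ∈ ((univ : Finset (Fin m × Fin m)) \ I ×ˢ I),
      dist (e q.1 q.2) y₀ ^ p with hT4
  set T5 : ℝ := (1/2) * ∑ q ∈ ((univ : Finset (Fin n × Fin n)) \
      ((I.image fun i => π (Fin.castLE hmn i)) ×ˢ (I.image fun i => π (Fin.castLE hmn i)))),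
      dist y₀ (f q.1 q.2) ^ p with hT5
  have hvals : (T1 + T2 + T3 + T4 + T5) ^ (1/p : ℝ) = 0 := hval.symm
  have hIcard : (I.card : ℝ) ≤ (m : ℝ) := by
    exact_mod_cast (Finset.card_le_univ I).trans_eq (by simp)
  have h1 : 0 ≤ T1 := by
    apply mul_nonneg
    · have : (m:ℝ) ≤ (n:ℝ) := by exact_mod_cast hmn
      linarith
    · exact (Real.rpow_pos_of_pos hC p).le
  have h2 : 0 ≤ T2 := Finset.sum_nonneg fun i _ => Real.rpow_nonneg dist_nonneg _
  have h3 : 0 ≤ T3 := by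
    apply mul_nonneg (by norm_num)
    exact Finset.sum_nonneg fun i _ => Finset.sum_nonneg fun i' _ =>
      Real.rpow_nonneg dist_nonneg _
  have h4 : 0 ≤ T4 := mul_nonneg (by norm_num)
    (Finset.sum_nonneg fun q _ => Real.rpow_nonneg dist_nonneg _)
  have h5 : 0 ≤ T5 := mul_nonneg (by norm_num)
    (Finset.sum_nonneg fun q _ => Real.rpow_nonneg dist_nonneg _)
  have hbase : T1 + T2 + T3 + T4 + T5 = 0 := by
    have hnn : 0 ≤ T1 + T2 + T3 + T4 + T5 := by linarith
    exact (Real.rpow_eq_zero hnn hip).mp hvals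
  have e1 : T1 = 0 := by linarith
  have e2 : T2 = 0 := by linarith
  have e3 : T3 = 0 := by linarith
  -- From T1 = 0: m = n and I = univ
  have hCp : C ^ p ≠ 0 := ne_of_gt (Real.rpow_pos_of_pos hC p)
  have hcoeff : (m : ℝ) + (n : ℝ) - 2 * (I.card : ℝ) = 0 := by
    rcases mul_eq_zero.mp e1 with h | h
    · exact h
    · exact absurd h hCp
  have hmnR : (m:ℝ) ≤ (n:ℝ) := by exact_mod_cast hmn
  have hIm : (I.card : ℝ) = (m : ℝ) := by linarith
  have hmneq : m = n := by
    have : (m : ℝ) = (n : ℝ) := by linarith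
    exact_mod_cast this
  have hIuniv : I = Finset.univ := by
    apply Finset.eq_univ_of_card
    have : I.card = m := by exact_mod_cast hIm
    simpa using this
  subst hIuniv
  refine ⟨hmneq, π, ?_, ?_⟩
  · -- vertex attributes
    have hz := (Finset.sum_eq_zero_iff_of_nonneg
      (fun i _ => Real.rpow_nonneg dist_nonneg _)).mp e2
    intro i
    have := hz i (Finset.mem_univ i)
    have hd : dist (v i) (w (π (Fin.castLE hmn i))) = 0 := by
      by_contra hne
      have hpos : 0 < dist (v i) (w (π (Fin.castLE hmn i))) :=
        lt_of_le_of_ne dist_nonneg (Ne.symm hne)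
      exact absurd this (ne_of_gt (Real.rpow_pos_of_pos hpos p))
    have heq : v i = w (π (Fin.castLE hmn i)) := dist_eq_zero.mp hd
    have : Fin.castLE hmn i = Fin.cast hmneq i := by
      apply Fin.ext; rfl
    rwa [this] at heq
  · -- edge attributes
    have e3' : ∑ i : Fin m, ∑ i' : Fin m,
        dist (e i i') (f (π (Fin.castLE hmn i)) (π (Fin.castLE hmn i'))) ^ p = 0 := by
      have := e3
      rw [hT3] at this
      linarith
    have hz := (Finset.sum_eq_zero_iff_of_nonneg
      (fun i _ => Finset.sum_nonneg fun i' _ => Real.rpow_nonneg dist_nonneg _)).mp e3'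
    intro i i'
    have hz2 := (Finset.sum_eq_zero_iff_of_nonneg
      (fun i' _ => Real.rpow_nonneg dist_nonneg _)).mp (hz i (Finset.mem_univ i))
    have := hz2 i' (Finset.mem_univ i')
    have hd : dist (e i i') (f (π (Fin.castLE hmn i)) (π (Fin.castLE hmn i'))) = 0 := by
      by_contra hne
      have hpos : 0 < dist (e i i') (f (π (Fin.castLE hmn i)) (π (Fin.castLE hmn i'))) :=
        lt_of_le_of_ne dist_nonneg (Ne.symm hne)
      exact absurd this (ne_of_gt (Real.rpow_pos_of_pos hpos p))
    have heq := dist_eq_zero.mp hd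
    have hc : ∀ j : Fin m, Fin.castLE hmn j = Fin.cast hmneq j := fun j => Fin.ext rfl
    rwa [hc i, hc i'] at heq
end

section
/- Dividing the GTT distance by the maximal number of vertices does not in general yield a metric: let p = 1, C > 0, and suppose X contains points x₁, x₂ with d_X(x₁,x₂) ≥ 2C. Let G₁ = ([1],v,e) with v₁ = x₁, G₂ = ([1],w,f) with w₁ = x₂, and G₃ = ([2],u,g) with u₁ = x₁, u₂ = x₂, where e, f, g are identically y₀. Then (1/max{1,1})·d_{G,A}(G₁,G₂) = 2C > C = (1/max{1,2})·d_{G,A}(G₁,G₃) + (1/max{2,1})·d_{G,A}(G₃,G₂); in particular the normalized map violates the triangle inequality. -/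
open Finset

/-- Remark: normalizing the GTT distance by the maximal number of
vertices violates the triangle inequality. With `p = 1`, points `x₁, x₂` at distance
`≥ 2C`, the one-point graphs `G₁ = ({x₁}, no edges)`, `G₂ = ({x₂}, no edges)` and the
two-point graph `G₃ = ({x₁,x₂}, no edges)` satisfy
`(1/max{1,1})·d(G₁,G₂) = 2C > C = (1/max{1,2})·d(G₁,G₃) + (1/max{2,1})·d(G₃,G₂)`. -/
theorem normalized_dGTT_not_a_metric
    {X Y : Type*} [PseudoMetricSpace X] [PseudoMetricSpace Y]
    (y₀ : Y) (C : ℝ) (hC : 0 < C)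
    (x₁ x₂ : X) (hx : 2 * C ≤ dist x₁ x₂) :
    (1 / (max 1 1 : ℝ)) *
        dGTT' y₀ 1 C (fun _ : Fin 1 => x₁) (fun _ _ => y₀)
          (fun _ : Fin 1 => x₂) (fun _ _ => y₀) = 2 * C ∧
    (1 / (max 1 2 : ℝ)) *
        dGTT' y₀ 1 C (fun _ : Fin 1 => x₁) (fun _ _ => y₀)
          (![x₁, x₂]) (fun _ _ => y₀)
      + (1 / (max 2 1 : ℝ)) *
        dGTT' y₀ 1 C (![x₁, x₂]) (fun _ _ => y₀)
          (fun _ : Fin 1 => x₂) (fun _ _ => y₀) = C ∧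
    C < 2 * C := by
  have hIcases : ∀ J : Finset (Fin 1), J = ∅ ∨ J = {0} := by decide
  have key1 : dGTT y₀ 1 C (le_refl 1) (fun _ : Fin 1 => x₁) (fun _ _ => y₀)
      (fun _ : Fin 1 => x₂) (fun _ _ => y₀) = 2 * C := by
    unfold dGTT
    apply le_antisymm
    · refine le_trans (Finset.inf'_le _ (Finset.mem_univ
        ((∅ : Finset (Fin 1)), (1 : Equiv.Perm (Fin 1))))) ?_
      simp [gttVal, dist_self]
      linarith
    · apply Finset.le_inf'
      rintro ⟨I, π⟩ -
      rcases hIcases I with h | h <;> subst h <;>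
        simp [gttVal, dist_self] <;> linarith
  have key2 : dGTT y₀ 1 C (by norm_num : (1:ℕ) ≤ 2) (fun _ : Fin 1 => x₁)
      (fun _ _ => y₀) (![x₁, x₂]) (fun _ _ => y₀) = C := by
    unfold dGTT
    apply le_antisymm
    · refine le_trans (Finset.inf'_le _ (Finset.mem_univ
        (({0} : Finset (Fin 1)), (1 : Equiv.Perm (Fin 2))))) ?_
      simp [gttVal, dist_self]
    · apply Finset.le_inf'
      rintro ⟨I, π⟩ -
      rcases hIcases I with h | h <;> subst h <;>
        simp [gttVal, dist_self]
      all_goals nlinarith [dist_nonneg (x := x₁) (y := (![x₁, x₂]) (π 0)), hC]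
  have key3 : dGTT y₀ 1 C (by norm_num : (1:ℕ) ≤ 2) (fun _ : Fin 1 => x₂)
      (fun _ _ => y₀) (![x₁, x₂]) (fun _ _ => y₀) = C := by
    unfold dGTT
    apply le_antisymm
    · refine le_trans (Finset.inf'_le _ (Finset.mem_univ
        (({0} : Finset (Fin 1)), (Equiv.swap (0 : Fin 2) 1)))) ?_
      simp [gttVal, dist_self]
    · apply Finset.le_inf'
      rintro ⟨I, π⟩ -
      rcases hIcases I with h | h <;> subst h <;>
        simp [gttVal, dist_self]
      all_goals nlinarith [dist_nonneg (x := x₂) (y := (![x₁, x₂]) (π 0)), hC]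
  have e1 : dGTT' y₀ 1 C (fun _ : Fin 1 => x₁) (fun _ _ => y₀)
      (fun _ : Fin 1 => x₂) (fun _ _ => y₀) = 2 * C := by
    rw [dGTT', dif_pos (le_refl 1)]; exact key1
  have e2 : dGTT' y₀ 1 C (fun _ : Fin 1 => x₁) (fun _ _ => y₀)
      (![x₁, x₂]) (fun _ _ => y₀) = C := by
    rw [dGTT', dif_pos (by norm_num : (1:ℕ) ≤ 2)]; exact key2
  have e3 : dGTT' y₀ 1 C (![x₁, x₂]) (fun _ _ => y₀)
      (fun _ : Fin 1 => x₂) (fun _ _ => y₀) = C := by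
    rw [dGTT', dif_neg (by norm_num : ¬ (2:ℕ) ≤ 1)]; exact key3
  refine ⟨?_, ?_, by linarith⟩
  · rw [e1]; norm_num
  · rw [e2, e3]; norm_num; ring
end

section
/- Let ([m],v,e) and ([n],w,f) be attributed simple graphs with m ≤ n and n ≥ 1. Adjoin an auxiliary point x_* to X with d_X(x,x_*)^p = C₂^p for all x ∈ X (and d_X(x_*,x_*) = 0). Enlarge ([m],v,e) to size n by setting v_i = x_* for m+1 ≤ i ≤ n and e_{ii'} = y₀ whenever max{i,i'} ≥ m+1. Then d_{G,R₂}(([m],v,e),([n],w,f)) = n^{−1/p}·min over π ∈ S_n of [Σ_{i∈[n]} d_X(v_i,w_{π(i)})^p + ½·(n−1)^{−1}·Σ_{(i,i')∈[n]²} d_Y(e_{ii'},f_{π(i)π(i')})^p]^{1/p} = d_{G,R₂}(([n],v,e),([n],w,f)). -/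
open Finset

private lemma sum_split_aux {m n : ℕ} (hmn : m ≤ n) (A : Fin m → ℝ) (c : ℝ) :
    (∑ i : Fin n, if h : (i : ℕ) < m then A ⟨i, h⟩ else c)
      = ((n : ℝ) - m) * c + ∑ i : Fin m, A i := by
  have h : m + (n - m) = n := Nat.add_sub_cancel' hmn
  have h1 : (∑ i : Fin n, if h : (i : ℕ) < m then A ⟨i, h⟩ else c)
      = ∑ i : Fin (m + (n - m)), (if h' : ((Fin.cast h i : Fin n) : ℕ) < m then A ⟨_, h'⟩ else c) :=
    (Fin.sum_congr' _ h).symm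
  rw [h1, Fin.sum_univ_add]
  have h2 : ∀ i : Fin m, (if h' : ((Fin.cast h (Fin.castAdd _ i) : Fin n) : ℕ) < m then A ⟨_, h'⟩ else c) = A i := by
    intro i
    rw [dif_pos (by simpa using i.isLt)]
    exact congrArg A (by ext; simp)
  have h3 : ∀ j : Fin (n - m), (if h' : ((Fin.cast h (Fin.natAdd m j) : Fin n) : ℕ) < m then A ⟨_, h'⟩ else c) = c := by
    intro j
    rw [dif_neg (by simp)]
  rw [Finset.sum_congr rfl (fun i _ => h2 i), Finset.sum_congr rfl (fun j _ => h3 j),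
    Finset.sum_const, card_univ, Fintype.card_fin, nsmul_eq_mul, Nat.cast_sub hmn]
  ring

/-- Proposition: GOSPA2 via filling up the smaller graph. Adjoin an
auxiliary vertex `x⋆` (in an extension `X'` of `X`) with `d(x,x⋆)^p = C₂^p`; fill up
`([m],v,e)` to size `n` with isolated auxiliary vertices (all new edge attributes `y₀`).
Then the GOSPA2 distance equals the optimal matching expression for the two size-`n`
graphs, which in turn is the GOSPA2 distance of the filled-up graphs. -/
theorem dGOSPA2_eq_fillup
    {X X' Y : Type*} [PseudoMetricSpace X] [PseudoMetricSpace X'] [PseudoMetricSpace Y]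
    (y₀ : Y) (p C₂ CX CY : ℝ) (hp : 1 ≤ p)
    (hCX0 : 0 ≤ CX) (hCY0 : 0 ≤ CY)
    (hdX : ∀ x x' : X, dist x x' ≤ CX) (hdY : ∀ y y' : Y, dist y y' ≤ CY)
    (hC₂ : CX ^ p + CY ^ p ≤ C₂ ^ p)
    (hY3 : 1 < p → ∀ y₁ y₂ : Y, dist y₁ y₂ ≤ max (dist y₁ y₀) (dist y₀ y₂))
    {m n : ℕ} (hmn : m ≤ n) (hn : 1 ≤ n)
    (v : Fin m → X) (e : Fin m → Fin m → Y)
    (w : Fin n → X) (f : Fin n → Fin n → Y)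
    (he : IsGraph y₀ e) (hf : IsGraph y₀ f)
    (ιX : X → X') (hιX : ∀ x x', dist (ιX x) (ιX x') = dist x x')
    (xstar : X')
    (hxstar : ∀ x, dist (ιX x) xstar ^ p = C₂ ^ p)
    (v' : Fin n → X')
    (hv' : ∀ i : Fin n, v' i = if h : (i : ℕ) < m then ιX (v ⟨i.1, h⟩) else xstar)
    (e' : Fin n → Fin n → Y)
    (he' : ∀ i i' : Fin n, e' i i' =
      if h : (i : ℕ) < m ∧ (i' : ℕ) < m then e ⟨i.1, h.1⟩ ⟨i'.1, h.2⟩ else y₀)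
    (w' : Fin n → X') (hw' : ∀ j : Fin n, w' j = ιX (w j)) :
    dGOSPA2 y₀ p C₂ hmn v e w f =
      ((n : ℝ) ^ (1/p))⁻¹ *
        Finset.inf' Finset.univ Finset.univ_nonempty
          (fun π : Equiv.Perm (Fin n) =>
            ((∑ i : Fin n, dist (v' i) (w' (π i)) ^ p)
              + (1/2) * ((n : ℝ) - 1)⁻¹ *
                  ∑ i : Fin n, ∑ i' : Fin n,
                    dist (e' i i') (f (π i) (π i')) ^ p) ^ (1/p)) ∧
    dGOSPA2 y₀ p C₂ hmn v e w f = dGOSPA2 y₀ p C₂ (le_refl n) v' e' w' f := by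
  have key : ∀ π : Equiv.Perm (Fin n),
      ((n : ℝ) - (m : ℝ)) * C₂ ^ p
        + ∑ i : Fin m, dist (v i) (w (π (Fin.castLE hmn i))) ^ p
        + (1/2) * ((n : ℝ) - 1)⁻¹ *
            ∑ i : Fin n, ∑ i' : Fin n,
              (if h : (i : ℕ) < m ∧ (i' : ℕ) < m
               then dist (e ⟨i.1, h.1⟩ ⟨i'.1, h.2⟩) (f (π i) (π i')) ^ p
               else dist y₀ (f (π i) (π i')) ^ p)
      = (∑ i : Fin n, dist (v' i) (w' (π i)) ^ p)
        + (1/2) * ((n : ℝ) - 1)⁻¹ *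
            ∑ i : Fin n, ∑ i' : Fin n, dist (e' i i') (f (π i) (π i')) ^ p := by
    intro π
    have hvsum : ∑ i : Fin n, dist (v' i) (w' (π i)) ^ p
        = ((n : ℝ) - m) * C₂ ^ p
          + ∑ i : Fin m, dist (v i) (w (π (Fin.castLE hmn i))) ^ p := by
      have hpt : ∀ i : Fin n, dist (v' i) (w' (π i)) ^ p
          = if h : (i : ℕ) < m
            then dist (v ⟨i.1, h⟩) (w (π (Fin.castLE hmn ⟨i.1, h⟩))) ^ p else C₂ ^ p := by
        intro i
        rw [hv' i, hw' (π i)]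
        split
        · rw [hιX]
          rfl
        · rw [dist_comm, hxstar]

      rw [Finset.sum_congr rfl fun i _ => hpt i,
        sum_split_aux hmn (fun j : Fin m => dist (v j) (w (π (Fin.castLE hmn j))) ^ p)]
    have hesum : ∀ i i' : Fin n,
        (if h : (i : ℕ) < m ∧ (i' : ℕ) < m
         then dist (e ⟨i.1, h.1⟩ ⟨i'.1, h.2⟩) (f (π i) (π i')) ^ p
         else dist y₀ (f (π i) (π i')) ^ p)
        = dist (e' i i') (f (π i) (π i')) ^ p := by
      intro i i'
      rw [he' i i']
      split <;> rfl
    rw [hvsum, Finset.sum_congr rfl fun i _ => Finset.sum_congr rfl fun i' _ => hesum i i']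
  have first : dGOSPA2 y₀ p C₂ hmn v e w f =
      ((n : ℝ) ^ (1/p))⁻¹ *
        Finset.inf' Finset.univ Finset.univ_nonempty
          (fun π : Equiv.Perm (Fin n) =>
            ((∑ i : Fin n, dist (v' i) (w' (π i)) ^ p)
              + (1/2) * ((n : ℝ) - 1)⁻¹ *
                  ∑ i : Fin n, ∑ i' : Fin n,
                    dist (e' i i') (f (π i) (π i')) ^ p) ^ (1/p)) := by
    unfold dGOSPA2
    refine congrArg (((n : ℝ) ^ (1/p))⁻¹ * ·)
      (congrArg (Finset.inf' Finset.univ Finset.univ_nonempty) (funext fun π => ?_))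
    rw [key π]
  refine ⟨first, first.trans ?_⟩
  unfold dGOSPA2
  refine congrArg (((n : ℝ) ^ (1/p))⁻¹ * ·)
    (congrArg (Finset.inf' Finset.univ Finset.univ_nonempty) (funext fun π => ?_))
  congr 1
  have hd : ∀ i i' : Fin n,
      (if h : (i : ℕ) < n ∧ (i' : ℕ) < n
       then dist (e' ⟨i.1, h.1⟩ ⟨i'.1, h.2⟩) (f (π i) (π i')) ^ p
       else dist y₀ (f (π i) (π i')) ^ p)
      = dist (e' i i') (f (π i) (π i')) ^ p := by
    intro i i'
    rw [dif_pos ⟨i.isLt, i'.isLt⟩]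
  rw [Finset.sum_congr rfl fun i _ => Finset.sum_congr rfl fun i' _ => hd i i']
  have hc : ∀ i : Fin n, dist (v' i) (w' (π (Fin.castLE (le_refl n) i))) ^ p
      = dist (v' i) (w' (π i)) ^ p := fun i => rfl
  rw [Finset.sum_congr rfl fun i _ => hc i]
  ring
end

section
/- If d_X and d_Y are metrics (not merely pseudometrics), then both GOSPA distances separate graphs up to relabeling: for i ∈ {1,2}, if d_{G,R_i}(([m],v,e),([n],w,f)) = 0 then m = n and there exists a permutation π ∈ S_n with v_i = w_{π(i)} and e_{ii'} = f_{π(i)π(i')} for all i,i' ∈ [n]. -/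
open Finset

private lemma add3_eq_zero' {a b c : ℝ} (ha : 0 ≤ a) (hb : 0 ≤ b) (hc : 0 ≤ c)
    (h : a + b + c = 0) : a = 0 ∧ b = 0 ∧ c = 0 :=
  ⟨by linarith, by linarith, by linarith⟩

/-- Theorem: if `d_X` and `d_Y` are metrics, then both GOSPA distances
separate graphs up to relabeling: vanishing GOSPA1 or GOSPA2 distance implies the graphs
are equal up to a permutation of the vertex set. -/
theorem dGOSPA_eq_zero_implies_graphEqual
    {X Y : Type*} [MetricSpace X] [MetricSpace Y]
    (y₀ : Y) (p C₁ C₂ CX CY : ℝ) (hp : 1 ≤ p)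
    (hCX0 : 0 ≤ CX) (hCY0 : 0 ≤ CY)
    (hdX : ∀ x x' : X, dist x x' ≤ CX) (hdY : ∀ y y' : Y, dist y y' ≤ CY)
    (hC₁ : CX ^ p + (1/2) * CY ^ p ≤ C₁ ^ p) (hC₁0 : 0 < C₁)
    (hC₂ : CX ^ p + CY ^ p ≤ C₂ ^ p) (hC₂0 : 0 < C₂)
    (hY3 : 1 < p → ∀ y₁ y₂ : Y, dist y₁ y₂ ≤ max (dist y₁ y₀) (dist y₀ y₂))
    {m n : ℕ} (hmn : m ≤ n)
    (v : Fin m → X) (e : Fin m → Fin m → Y)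
    (w : Fin n → X) (f : Fin n → Fin n → Y)
    (he : IsGraph y₀ e) (hf : IsGraph y₀ f) :
    (dGOSPA1 p C₁ CY hmn v e w f = 0 →
      ∃ h : m = n, ∃ π : Equiv.Perm (Fin n),
        (∀ i : Fin m, v i = w (π (Fin.cast h i))) ∧
        (∀ i i' : Fin m, e i i' = f (π (Fin.cast h i)) (π (Fin.cast h i')))) ∧
    (dGOSPA2 y₀ p C₂ hmn v e w f = 0 →
      ∃ h : m = n, ∃ π : Equiv.Perm (Fin n),
        (∀ i : Fin m, v i = w (π (Fin.cast h i))) ∧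
        (∀ i i' : Fin m, e i i' = f (π (Fin.cast h i)) (π (Fin.cast h i')))) := by
  have hppos : (0:ℝ) < p := lt_of_lt_of_le one_pos hp
  have hpne : p ≠ 0 := hppos.ne'
  have hqpos : (0:ℝ) < 1/p := by positivity
  have hqne : (1/p : ℝ) ≠ 0 := hqpos.ne'
  rcases Nat.eq_zero_or_pos n with hn0 | hn0
  · subst hn0
    have hm0 : m = 0 := Nat.le_zero.mp hmn
    exact ⟨fun _ => ⟨hm0, 1, fun i => (Fin.cast hm0 i).elim0, fun i _ => (Fin.cast hm0 i).elim0⟩,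
           fun _ => ⟨hm0, 1, fun i => (Fin.cast hm0 i).elim0, fun i _ => (Fin.cast hm0 i).elim0⟩⟩
  have hnpos : (0:ℝ) < n := by exact_mod_cast hn0
  have hinvne : ((n:ℝ) ^ (1/p))⁻¹ ≠ 0 :=
    inv_ne_zero (ne_of_gt (Real.rpow_pos_of_pos hnpos (1/p)))
  have hnm : (0:ℝ) ≤ (n:ℝ) - (m:ℝ) := by
    have : (m:ℝ) ≤ (n:ℝ) := by exact_mod_cast hmn
    linarith
  have hn1 : (0:ℝ) ≤ ((n:ℝ) - 1)⁻¹ := by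
    apply inv_nonneg.mpr
    have : (1:ℝ) ≤ (n:ℝ) := by exact_mod_cast hn0
    linarith
  constructor
  · -- GOSPA1
    intro h0
    unfold dGOSPA1 at h0
    rcases mul_eq_zero.mp h0 with h | h
    · exact absurd h hinvne
    obtain ⟨π₀, -, hmin⟩ := Finset.exists_mem_eq_inf' Finset.univ_nonempty
      (fun π : Equiv.Perm (Fin n) =>
        (((n : ℝ) - (m : ℝ)) * C₁ ^ p
          + ∑ i : Fin m, dist (v i) (w (π (Fin.castLE hmn i))) ^ p
          + (1/2) * ((n : ℝ) - 1)⁻¹ *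
              ∑ i : Fin m, ((∑ i' : Fin m,
                  dist (e i i') (f (π (Fin.castLE hmn i)) (π (Fin.castLE hmn i'))) ^ p)
                + ((n : ℝ) - (m : ℝ)) * CY ^ p)) ^ (1/p))
    have hval : (((n : ℝ) - (m : ℝ)) * C₁ ^ p
        + ∑ i : Fin m, dist (v i) (w (π₀ (Fin.castLE hmn i))) ^ p
        + (1/2) * ((n : ℝ) - 1)⁻¹ *
            ∑ i : Fin m, ((∑ i' : Fin m,
                dist (e i i') (f (π₀ (Fin.castLE hmn i)) (π₀ (Fin.castLE hmn i'))) ^ p)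
              + ((n : ℝ) - (m : ℝ)) * CY ^ p)) ^ (1/p) = 0 := hmin.symm.trans h
    have hA : (0:ℝ) ≤ ((n : ℝ) - (m : ℝ)) * C₁ ^ p :=
      mul_nonneg hnm (Real.rpow_nonneg hC₁0.le p)
    have hB : (0:ℝ) ≤ ∑ i : Fin m, dist (v i) (w (π₀ (Fin.castLE hmn i))) ^ p :=
      Finset.sum_nonneg fun i _ => Real.rpow_nonneg dist_nonneg p
    have hDin : ∀ i ∈ (Finset.univ : Finset (Fin m)), (0:ℝ) ≤ (∑ i' : Fin m,
        dist (e i i') (f (π₀ (Fin.castLE hmn i)) (π₀ (Fin.castLE hmn i'))) ^ p)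
          + ((n : ℝ) - (m : ℝ)) * CY ^ p := fun i _ =>
      add_nonneg (Finset.sum_nonneg fun i' _ => Real.rpow_nonneg dist_nonneg p)
        (mul_nonneg hnm (Real.rpow_nonneg hCY0 p))
    have hD : (0:ℝ) ≤ (1/2) * ((n : ℝ) - 1)⁻¹ *
        ∑ i : Fin m, ((∑ i' : Fin m,
            dist (e i i') (f (π₀ (Fin.castLE hmn i)) (π₀ (Fin.castLE hmn i'))) ^ p)
          + ((n : ℝ) - (m : ℝ)) * CY ^ p) :=
      mul_nonneg (mul_nonneg (by norm_num) hn1) (Finset.sum_nonneg hDin)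
    have hS0 := (Real.rpow_eq_zero (by linarith) hqne).mp hval
    obtain ⟨hA0, hB0, hD0⟩ := add3_eq_zero' hA hB hD hS0
    have hmeqn : m = n := by
      have hC₁p : (0:ℝ) < C₁ ^ p := Real.rpow_pos_of_pos hC₁0 p
      have : (n:ℝ) - (m:ℝ) = 0 := by
        rcases mul_eq_zero.mp hA0 with h' | h'
        · exact h'
        · exact absurd h' hC₁p.ne'
      have : (m:ℝ) = (n:ℝ) := by linarith
      exact_mod_cast this
    subst hmeqn
    refine ⟨rfl, π₀, ?_, ?_⟩
    · intro i
      have := (Finset.sum_eq_zero_iff_of_nonneg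
        (fun i _ => Real.rpow_nonneg dist_nonneg p)).mp hB0 i (Finset.mem_univ i)
      exact dist_eq_zero.mp ((Real.rpow_eq_zero dist_nonneg hpne).mp this)
    · intro i i'
      by_cases hm1 : m = 1
      · have hii' : i = i' := Fin.ext (by omega)
        rw [hii', he.2 i']
        exact (hf.2 _).symm
      · have hm2 : (1:ℝ) < (m:ℝ) := by exact_mod_cast (by omega : 1 < m)
        have hinv2 : (0:ℝ) < ((m:ℝ) - 1)⁻¹ := inv_pos.mpr (by linarith)
        have hsum : ∑ i : Fin m, ((∑ i' : Fin m,
            dist (e i i') (f (π₀ (Fin.castLE hmn i)) (π₀ (Fin.castLE hmn i'))) ^ p)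
              + ((m : ℝ) - (m : ℝ)) * CY ^ p) = 0 := by
          rcases mul_eq_zero.mp hD0 with h' | h'
          · exact absurd h' (by positivity)
          · exact h'
        have hterm := (Finset.sum_eq_zero_iff_of_nonneg hDin).mp hsum i (Finset.mem_univ i)
        have hin : ∑ i' : Fin m,
            dist (e i i') (f (π₀ (Fin.castLE hmn i)) (π₀ (Fin.castLE hmn i'))) ^ p = 0 := by
          have : ((m : ℝ) - (m : ℝ)) * CY ^ p = 0 := by rw [sub_self, zero_mul]
          linarith
        have := (Finset.sum_eq_zero_iff_of_nonneg
          (fun i' _ => Real.rpow_nonneg dist_nonneg p)).mp hin i' (Finset.mem_univ i')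
        exact dist_eq_zero.mp ((Real.rpow_eq_zero dist_nonneg hpne).mp this)
  · -- GOSPA2
    intro h0
    unfold dGOSPA2 at h0
    rcases mul_eq_zero.mp h0 with h | h
    · exact absurd h hinvne
    obtain ⟨π₀, -, hmin⟩ := Finset.exists_mem_eq_inf' Finset.univ_nonempty
      (fun π : Equiv.Perm (Fin n) =>
        (((n : ℝ) - (m : ℝ)) * C₂ ^ p
          + ∑ i : Fin m, dist (v i) (w (π (Fin.castLE hmn i))) ^ p
          + (1/2) * ((n : ℝ) - 1)⁻¹ *
              ∑ i : Fin n, ∑ i' : Fin n,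
                (if h : (i : ℕ) < m ∧ (i' : ℕ) < m
                 then dist (e ⟨i.1, h.1⟩ ⟨i'.1, h.2⟩) (f (π i) (π i')) ^ p
                 else dist y₀ (f (π i) (π i')) ^ p)) ^ (1/p))
    have hval : (((n : ℝ) - (m : ℝ)) * C₂ ^ p
        + ∑ i : Fin m, dist (v i) (w (π₀ (Fin.castLE hmn i))) ^ p
        + (1/2) * ((n : ℝ) - 1)⁻¹ *
            ∑ i : Fin n, ∑ i' : Fin n,
              (if h : (i : ℕ) < m ∧ (i' : ℕ) < m
               then dist (e ⟨i.1, h.1⟩ ⟨i'.1, h.2⟩) (f (π₀ i) (π₀ i')) ^ p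
               else dist y₀ (f (π₀ i) (π₀ i')) ^ p)) ^ (1/p) = 0 := hmin.symm.trans h
    have hA : (0:ℝ) ≤ ((n : ℝ) - (m : ℝ)) * C₂ ^ p :=
      mul_nonneg hnm (Real.rpow_nonneg hC₂0.le p)
    have hB : (0:ℝ) ≤ ∑ i : Fin m, dist (v i) (w (π₀ (Fin.castLE hmn i))) ^ p :=
      Finset.sum_nonneg fun i _ => Real.rpow_nonneg dist_nonneg p
    have hDin : ∀ i ∈ (Finset.univ : Finset (Fin n)), (0:ℝ) ≤ ∑ i' : Fin n,
        (if h : (i : ℕ) < m ∧ (i' : ℕ) < m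
         then dist (e ⟨i.1, h.1⟩ ⟨i'.1, h.2⟩) (f (π₀ i) (π₀ i')) ^ p
         else dist y₀ (f (π₀ i) (π₀ i')) ^ p) := fun i _ =>
      Finset.sum_nonneg fun i' _ => by
        split_ifs <;> exact Real.rpow_nonneg dist_nonneg p
    have hD : (0:ℝ) ≤ (1/2) * ((n : ℝ) - 1)⁻¹ *
        ∑ i : Fin n, ∑ i' : Fin n,
          (if h : (i : ℕ) < m ∧ (i' : ℕ) < m
           then dist (e ⟨i.1, h.1⟩ ⟨i'.1, h.2⟩) (f (π₀ i) (π₀ i')) ^ p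
           else dist y₀ (f (π₀ i) (π₀ i')) ^ p) :=
      mul_nonneg (mul_nonneg (by norm_num) hn1) (Finset.sum_nonneg hDin)
    have hS0 := (Real.rpow_eq_zero (by linarith) hqne).mp hval
    obtain ⟨hA0, hB0, hD0⟩ := add3_eq_zero' hA hB hD hS0
    have hmeqn : m = n := by
      have hC₂p : (0:ℝ) < C₂ ^ p := Real.rpow_pos_of_pos hC₂0 p
      have : (n:ℝ) - (m:ℝ) = 0 := by
        rcases mul_eq_zero.mp hA0 with h' | h'
        · exact h'
        · exact absurd h' hC₂p.ne'
      have : (m:ℝ) = (n:ℝ) := by linarith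
      exact_mod_cast this
    subst hmeqn
    refine ⟨rfl, π₀, ?_, ?_⟩
    · intro i
      have := (Finset.sum_eq_zero_iff_of_nonneg
        (fun i _ => Real.rpow_nonneg dist_nonneg p)).mp hB0 i (Finset.mem_univ i)
      exact dist_eq_zero.mp ((Real.rpow_eq_zero dist_nonneg hpne).mp this)
    · intro i i'
      by_cases hm1 : m = 1
      · have hii' : i = i' := Fin.ext (by omega)
        rw [hii', he.2 i']
        exact (hf.2 _).symm
      · have hm2 : (1:ℝ) < (m:ℝ) := by exact_mod_cast (by omega : 1 < m)
        have hinv2 : (0:ℝ) < ((m:ℝ) - 1)⁻¹ := inv_pos.mpr (by linarith)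
        have hsum : ∑ i : Fin m, ∑ i' : Fin m,
            (if h : (i : ℕ) < m ∧ (i' : ℕ) < m
             then dist (e ⟨i.1, h.1⟩ ⟨i'.1, h.2⟩) (f (π₀ i) (π₀ i')) ^ p
             else dist y₀ (f (π₀ i) (π₀ i')) ^ p) = 0 := by
          rcases mul_eq_zero.mp hD0 with h' | h'
          · exact absurd h' (by positivity)
          · exact h'
        have hterm := (Finset.sum_eq_zero_iff_of_nonneg hDin).mp hsum i (Finset.mem_univ i)
        have hterm2 := (Finset.sum_eq_zero_iff_of_nonneg
          (fun i' _ => by split_ifs <;> exact Real.rpow_nonneg dist_nonneg p :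
            ∀ i' ∈ (Finset.univ : Finset (Fin m)), (0:ℝ) ≤
              (if h : (i : ℕ) < m ∧ (i' : ℕ) < m
               then dist (e ⟨i.1, h.1⟩ ⟨i'.1, h.2⟩) (f (π₀ i) (π₀ i')) ^ p
               else dist y₀ (f (π₀ i) (π₀ i')) ^ p))).mp hterm i' (Finset.mem_univ i')
        rw [dif_pos ⟨i.isLt, i'.isLt⟩] at hterm2
        exact dist_eq_zero.mp ((Real.rpow_eq_zero dist_nonneg hpne).mp hterm2)
end

section
/- The lower bound C₂^p ≥ C_X^p + C_Y^p in the definition of GOSPA2 cannot be relaxed to C₂ = C_X + ½·C_Y: let p = 1, C₂ = C_X + ½·C_Y with C_Y > 0, and suppose there exist x₁, x₂, x₃ ∈ X with d_X(x₃,x₁) = d_X(x₃,x₂) = C_X and y₁ ∈ Y with d_Y(y₀,y₁) = C_Y. Define G₁ = ([1],v,e) with v₁ = x₃ and e ≡ y₀; G₂ = ([2],w,f) with w_i = x_i for i ∈ [2], f₁₂ = f₂₁ = y₁ and f_{ij} = y₀ otherwise; G₃ = ([3],u,g) with u_i = x_i for i ∈ [3], g₁₂ = g₂₁ = y₁ and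 g_{ij} = y₀ otherwise. Then d_{G,R₂}(G₁,G₂) = C₂ + C_Y/4 > C₂ + C_Y/6 = d_{G,R₂}(G₁,G₃) + d_{G,R₂}(G₃,G₂), so the triangle inequality fails. -/
open Finset

/-- Remark: the bound `C₂^p ≥ C_X^p + C_Y^p` in GOSPA2 cannot be
relaxed to `C₂ = C_X + ½·C_Y`: for `p = 1` there exist three graphs violating the
triangle inequality. -/
theorem dGOSPA2_relaxed_penalty_not_a_metric
    {X Y : Type*} [PseudoMetricSpace X] [PseudoMetricSpace Y]
    (y₀ : Y) (C₂ CX CY : ℝ)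
    (hCY0 : 0 < CY)
    (hdX : ∀ x x' : X, dist x x' ≤ CX) (hdY : ∀ y y' : Y, dist y y' ≤ CY)
    (hC₂ : C₂ = CX + (1/2) * CY)
    (x₁ x₂ x₃ : X) (y₁ : Y)
    (h31 : dist x₃ x₁ = CX) (h32 : dist x₃ x₂ = CX)
    (h01 : dist y₀ y₁ = CY) :
    dGOSPA2 y₀ 1 C₂ (by norm_num : (1:ℕ) ≤ 2)
        (fun _ : Fin 1 => x₃) (fun _ _ => y₀)
        (![x₁, x₂]) (fun i j => if i = j then y₀ else y₁)
      = C₂ + CY / 4 ∧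
    dGOSPA2 y₀ 1 C₂ (by norm_num : (1:ℕ) ≤ 3)
        (fun _ : Fin 1 => x₃) (fun _ _ => y₀)
        (![x₁, x₂, x₃])
        (fun i j => if (i = 0 ∧ j = 1) ∨ (i = 1 ∧ j = 0) then y₁ else y₀)
      + dGOSPA2 y₀ 1 C₂ (by norm_num : (2:ℕ) ≤ 3)
        (![x₁, x₂]) (fun i j => if i = j then y₀ else y₁)
        (![x₁, x₂, x₃])
        (fun i j => if (i = 0 ∧ j = 1) ∨ (i = 1 ∧ j = 0) then y₁ else y₀)
      = C₂ + CY / 6 ∧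
    C₂ + CY / 6 < C₂ + CY / 4 := by
  have h13 : dGOSPA2 y₀ 1 C₂ (by norm_num : (1:ℕ) ≤ 3)
        (fun _ : Fin 1 => x₃) (fun _ _ => y₀)
        (![x₁, x₂, x₃])
        (fun i j => if (i = 0 ∧ j = 1) ∨ (i = 1 ∧ j = 0) then y₁ else y₀)
      = (3:ℝ)⁻¹ * (2 * C₂ + CY / 2) := by
    rw [dGOSPA2]
    simp only [one_div, inv_one, Real.rpow_one, Nat.cast_ofNat, Nat.cast_one,
      dite_eq_ite, ite_self]
    congr 1
    apply le_antisymm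
    · refine (Finset.inf'_le _ (Finset.mem_univ (Equiv.swap 0 2))).trans (le_of_eq ?_)
      simp only [Fin.sum_univ_one, Fin.sum_univ_three, Fin.castLE_zero, Fin.isValue,
        Equiv.swap_apply_left, Equiv.swap_apply_right]
      norm_num [Equiv.swap_apply_def, Fin.ext_iff, dist_self, h01, Matrix.cons_val_two,
        Matrix.tail_cons, Matrix.head_cons]
      ring
    · refine Finset.le_inf' _ _ fun π _ => ?_
      have hre : (∑ i : Fin 3, ∑ i' : Fin 3, dist y₀
            ((fun a b : Fin 3 => if (a = 0 ∧ b = 1) ∨ (a = 1 ∧ b = 0) then y₁ else y₀) (π i) (π i')))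
          = ∑ i : Fin 3, ∑ i' : Fin 3, dist y₀
            ((fun a b : Fin 3 => if (a = 0 ∧ b = 1) ∨ (a = 1 ∧ b = 0) then y₁ else y₀) i i') := by
        rw [Equiv.sum_comp π (fun j => ∑ i' : Fin 3, dist y₀
          ((fun a b : Fin 3 => if (a = 0 ∧ b = 1) ∨ (a = 1 ∧ b = 0) then y₁ else y₀) j (π i')))]
        exact Finset.sum_congr rfl fun j _ => Equiv.sum_comp π
          (fun j' => dist y₀ ((fun a b : Fin 3 => if (a = 0 ∧ b = 1) ∨ (a = 1 ∧ b = 0) then y₁ else y₀) j j'))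
      simp only at hre
      rw [hre]
      have hval : (∑ i : Fin 3, ∑ i' : Fin 3, dist y₀
          (if (i = 0 ∧ i' = 1) ∨ (i = 1 ∧ i' = 0) then y₁ else y₀)) = 2 * CY := by
        simp only [Fin.sum_univ_three, Fin.isValue]
        norm_num [dist_self, h01, show (2:Fin 3) ≠ 1 from by decide, show (2:Fin 3) ≠ 0 from by decide,
          show (1:Fin 3) ≠ 0 from by decide, show (0:Fin 3) ≠ 1 from by decide,
          show (0:Fin 3) ≠ 2 from by decide, show (1:Fin 3) ≠ 2 from by decide]
        ring
      rw [hval]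
      have h1 : (0:ℝ) ≤ dist x₃ ((![x₁, x₂, x₃]) (π (Fin.castLE (by norm_num : (1:ℕ) ≤ 3) (0 : Fin 1)))) := dist_nonneg
      simp only [Fin.sum_univ_one]
      linarith
  have h23 : dGOSPA2 y₀ 1 C₂ (by norm_num : (2:ℕ) ≤ 3)
        (![x₁, x₂]) (fun i j => if i = j then y₀ else y₁)
        (![x₁, x₂, x₃])
        (fun i j => if (i = 0 ∧ j = 1) ∨ (i = 1 ∧ j = 0) then y₁ else y₀)
      = (3:ℝ)⁻¹ * C₂ := by
    rw [dGOSPA2]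
    simp only [one_div, inv_one, Real.rpow_one, Nat.cast_ofNat]
    congr 1
    apply le_antisymm
    · refine (Finset.inf'_le _ (Finset.mem_univ 1)).trans (le_of_eq ?_)
      simp only [Equiv.Perm.one_apply, Fin.sum_univ_two, Fin.sum_univ_three, Fin.isValue]
      norm_num [dist_self, Fin.castLE]
      simp [Fin.ext_iff, dist_self]
    · refine Finset.le_inf' _ _ fun π _ => ?_
      refine le_trans (le_of_eq ?_)
        (add_le_add (add_le_add le_rfl (Finset.sum_nonneg fun i _ => dist_nonneg))
          (mul_nonneg (by norm_num)
            (Finset.sum_nonneg fun i _ => Finset.sum_nonneg fun i' _ => by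
              split <;> exact dist_nonneg)))
      norm_num
  have h12 : dGOSPA2 y₀ 1 C₂ (by norm_num : (1:ℕ) ≤ 2)
        (fun _ : Fin 1 => x₃) (fun _ _ => y₀)
        (![x₁, x₂]) (fun i j => if i = j then y₀ else y₁)
      = (2:ℝ)⁻¹ * (C₂ + CX + CY) := by
    rw [dGOSPA2]
    simp only [one_div, inv_one, Real.rpow_one, Nat.cast_ofNat, Nat.cast_one]
    congr 1
    apply le_antisymm
    · refine (Finset.inf'_le _ (Finset.mem_univ 1)).trans (le_of_eq ?_)
      simp only [dite_eq_ite, ite_self, Equiv.Perm.one_apply, Fin.sum_univ_one,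
        Fin.sum_univ_two, Fin.castLE_zero, Fin.isValue]
      norm_num [dist_self, h01, h31]
      ring
    · refine Finset.le_inf' _ _ fun π _ => le_of_eq ?_
      have h0 := (by decide : ∀ j : Fin 2, j = 0 ∨ j = 1) (π 0)
      simp only [dite_eq_ite, ite_self, Equiv.apply_eq_iff_eq, Fin.sum_univ_one,
        Fin.sum_univ_two, Fin.castLE_zero, Fin.isValue]
      rcases h0 with h0 | h0 <;>
        norm_num [h0, dist_self, h01, h31, h32] <;> ring
  refine ⟨?_, ?_, by linarith⟩
  · rw [h12, hC₂]; ring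
  · rw [h13, h23]; ring
end

section
/- If the penalties satisfy C₁^p ≤ C₂^p − ½·C_Y^p (in addition to their defining lower bounds), then for any attributed simple graphs ([m],v,e) and ([n],w,f): d_{G,R₁}(([m],v,e),([n],w,f)) ≤ d_{G,R₂}(([m],v,e),([n],w,f)). -/
open Finset

lemma sum_dite_lt_aux {m n : ℕ} (hmn : m ≤ n) (G : ∀ j : Fin n, (j : ℕ) < m → ℝ) :
    ∑ j : Fin n, (if h : (j : ℕ) < m then G j h else 0)
      = ∑ i : Fin m, G (Fin.castLE hmn i) i.2 := by
  classical
  have hemb : Function.Injective (Fin.castLE hmn) := Fin.castLE_injective hmn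
  have h1 : ∑ i : Fin m, G (Fin.castLE hmn i) i.2
      = ∑ j ∈ Finset.univ.map ⟨Fin.castLE hmn, hemb⟩,
          (if h : (j : ℕ) < m then G j h else 0) := by
    rw [Finset.sum_map]
    apply Finset.sum_congr rfl
    intro i _
    simp only [Function.Embedding.coeFn_mk]
    rw [dif_pos (show ((Fin.castLE hmn i : Fin n) : ℕ) < m from i.2)]
  rw [h1]
  refine (Finset.sum_subset (Finset.subset_univ _) ?_).symm
  intro j _ hj
  refine dif_neg fun hjm => hj ?_
  simp only [Finset.mem_map, Finset.mem_univ, Function.Embedding.coeFn_mk]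
  exact ⟨⟨j, hjm⟩, trivial, Fin.ext rfl⟩

set_option maxHeartbeats 1000000 in
lemma dGOSPA1_le_dGOSPA2_aux
    {X Y : Type*} [PseudoMetricSpace X] [PseudoMetricSpace Y]
    (y₀ : Y) (p C₁ C₂ CY : ℝ) (hp : 1 ≤ p)
    (hCY0 : 0 ≤ CY)
    (hC1p : 0 ≤ C₁ ^ p)
    (hC₁₂ : C₁ ^ p ≤ C₂ ^ p - (1/2) * CY ^ p)
    {m n : ℕ} (hmn : m ≤ n)
    (v : Fin m → X) (e : Fin m → Fin m → Y)
    (w : Fin n → X) (f : Fin n → Fin n → Y) :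
    dGOSPA1 p C₁ CY hmn v e w f ≤ dGOSPA2 y₀ p C₂ hmn v e w f := by
  have hp0 : 0 < p := lt_of_lt_of_le one_pos hp
  have hip : 0 ≤ 1/p := by positivity
  have hCYp : 0 ≤ CY ^ p := Real.rpow_nonneg hCY0 p
  unfold dGOSPA1 dGOSPA2
  apply mul_le_mul_of_nonneg_left _ (by positivity)
  apply Finset.le_inf'
  intro π _
  apply le_trans (Finset.inf'_le _ (Finset.mem_univ π))
  set A := ∑ i : Fin m, dist (v i) (w (π (Fin.castLE hmn i))) ^ p with hA
  set B := ∑ i : Fin m, ∑ i' : Fin m,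
      dist (e i i') (f (π (Fin.castLE hmn i)) (π (Fin.castLE hmn i'))) ^ p with hB
  set D := ∑ i : Fin n, ∑ i' : Fin n,
      (if h : (i : ℕ) < m ∧ (i' : ℕ) < m
       then dist (e ⟨i.1, h.1⟩ ⟨i'.1, h.2⟩) (f (π i) (π i')) ^ p
       else dist y₀ (f (π i) (π i')) ^ p) with hD
  have hsum1 : ∑ i : Fin m, ((∑ i' : Fin m,
        dist (e i i') (f (π (Fin.castLE hmn i)) (π (Fin.castLE hmn i'))) ^ p)
      + ((n : ℝ) - (m : ℝ)) * CY ^ p)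
      = B + (m : ℝ) * (((n : ℝ) - (m : ℝ)) * CY ^ p) := by
    rw [Finset.sum_add_distrib, Finset.sum_const, Finset.card_univ, Fintype.card_fin,
      nsmul_eq_mul, hB]
  rw [hsum1]
  -- nonnegativity facts
  have hAnn : 0 ≤ A := Finset.sum_nonneg fun i _ => Real.rpow_nonneg dist_nonneg p
  have hBnn : 0 ≤ B := Finset.sum_nonneg fun i _ =>
    Finset.sum_nonneg fun i' _ => Real.rpow_nonneg dist_nonneg p
  have hBD : B ≤ D := by
    have step1 : B = ∑ i : Fin n, ∑ i' : Fin n,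
        (if h : (i : ℕ) < m ∧ (i' : ℕ) < m
         then dist (e ⟨i.1, h.1⟩ ⟨i'.1, h.2⟩) (f (π i) (π i')) ^ p
         else 0) := by
      rw [hB]
      rw [show (∑ i : Fin n, ∑ i' : Fin n,
          (if h : (i : ℕ) < m ∧ (i' : ℕ) < m
           then dist (e ⟨i.1, h.1⟩ ⟨i'.1, h.2⟩) (f (π i) (π i')) ^ p
           else 0))
        = ∑ i : Fin n, (if h : (i : ℕ) < m then
            ∑ i' : Fin n, (if h' : (i' : ℕ) < m
              then dist (e ⟨i.1, h⟩ ⟨i'.1, h'⟩) (f (π i) (π i')) ^ p else 0)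
          else 0) by
        apply Finset.sum_congr rfl
        intro i _
        by_cases hi : (i : ℕ) < m
        · rw [dif_pos hi]
          apply Finset.sum_congr rfl
          intro i' _
          by_cases hi' : (i' : ℕ) < m
          · rw [dif_pos ⟨hi, hi'⟩, dif_pos hi']
          · rw [dif_neg (by tauto), dif_neg hi']
        · rw [dif_neg hi]
          apply Finset.sum_eq_zero
          intro i' _
          rw [dif_neg (by tauto)]]
      rw [sum_dite_lt_aux hmn]
      apply Finset.sum_congr rfl
      intro i _
      rw [sum_dite_lt_aux hmn]
      apply Finset.sum_congr rfl
      intro i' _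
      congr
    rw [step1, hD]
    apply Finset.sum_le_sum
    intro i _
    apply Finset.sum_le_sum
    intro i' _
    by_cases h : (i : ℕ) < m ∧ (i' : ℕ) < m
    · rw [dif_pos h, dif_pos h]
    · rw [dif_neg h, dif_neg h]
      exact Real.rpow_nonneg dist_nonneg p
  have hDnn : 0 ≤ D := le_trans hBnn hBD
  -- the coefficient c
  rcases Nat.eq_zero_or_pos n with hn0 | hn1
  · -- n = 0 case: m = 0
    subst hn0
    have hm0 : m = 0 := Nat.le_zero.mp hmn
    subst hm0
    simp only [Finset.univ_eq_empty, Finset.sum_empty] at hA hB hD ⊢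
    rw [hA, hB, hD]
    norm_num
  · have hc0 : 0 ≤ ((n : ℝ) - 1)⁻¹ := by
      refine inv_nonneg.mpr ?_
      have : (1 : ℝ) ≤ (n : ℝ) := by exact_mod_cast hn1
      linarith
    set c := ((n : ℝ) - 1)⁻¹ with hcdef
    have hnm : (0 : ℝ) ≤ (n : ℝ) - (m : ℝ) := by
      have := hmn
      simp only [sub_nonneg]
      exact_mod_cast hmn
    have hkey : (m : ℝ) * c * ((n : ℝ) - (m : ℝ)) ≤ (n : ℝ) - (m : ℝ) := by
      rcases eq_or_lt_of_le hmn with h1 | h2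
      · subst h1; simp
      · have hm1 : (m : ℝ) ≤ (n : ℝ) - 1 := by
          have : m + 1 ≤ n := h2
          have : ((m : ℝ) + 1) ≤ (n : ℝ) := by exact_mod_cast this
          linarith
        have hmc : (m : ℝ) * c ≤ 1 := by
          rcases eq_or_lt_of_le (show 1 ≤ n from hn1) with h3 | h4
          · have : m = 0 := by omega
            subst this; simp
          · have hn2 : (1 : ℝ) < (n : ℝ) := by exact_mod_cast h4
            rw [hcdef]
            rw [mul_inv_le_iff₀ (by linarith)]
            linarith
        nlinarith
    have hrhs : ((n : ℝ) - (m : ℝ)) * C₁ ^ p + A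
          + 1 / 2 * c * (B + (m : ℝ) * (((n : ℝ) - (m : ℝ)) * CY ^ p))
        ≤ ((n : ℝ) - (m : ℝ)) * C₂ ^ p + A + 1 / 2 * c * D := by
      have h1 : 1 / 2 * c * B ≤ 1 / 2 * c * D :=
        mul_le_mul_of_nonneg_left hBD (by positivity)
      have h2 : 1 / 2 * c * ((m : ℝ) * (((n : ℝ) - (m : ℝ)) * CY ^ p))
          ≤ 1 / 2 * (((n : ℝ) - (m : ℝ)) * CY ^ p) := by
        have := mul_le_mul_of_nonneg_right hkey hCYp
        nlinarith
      have h3 : ((n : ℝ) - (m : ℝ)) * C₁ ^ p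
            + 1 / 2 * (((n : ℝ) - (m : ℝ)) * CY ^ p)
          ≤ ((n : ℝ) - (m : ℝ)) * C₂ ^ p := by
        nlinarith
      nlinarith
    apply Real.rpow_le_rpow _ hrhs hip
    have : 0 ≤ 1 / 2 * c * (B + (m : ℝ) * (((n : ℝ) - (m : ℝ)) * CY ^ p)) := by
      positivity
    nlinarith

/-- Proposition: relation of the GOSPA metrics. If in addition
`C₁^p ≤ C₂^p − ½·C_Y^p`, then `d_{G,R₁} ≤ d_{G,R₂}` for any two attributed simple
graphs. -/
theorem dGOSPA1_le_dGOSPA2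
    {X Y : Type*} [PseudoMetricSpace X] [PseudoMetricSpace Y]
    (y₀ : Y) (p C₁ C₂ CX CY : ℝ) (hp : 1 ≤ p)
    (hCX0 : 0 ≤ CX) (hCY0 : 0 ≤ CY)
    (hdX : ∀ x x' : X, dist x x' ≤ CX) (hdY : ∀ y y' : Y, dist y y' ≤ CY)
    (hC₁ : CX ^ p + (1/2) * CY ^ p ≤ C₁ ^ p)
    (hC₂ : CX ^ p + CY ^ p ≤ C₂ ^ p)
    (hC₁₂ : C₁ ^ p ≤ C₂ ^ p - (1/2) * CY ^ p)
    {m n : ℕ}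
    (v : Fin m → X) (e : Fin m → Fin m → Y)
    (w : Fin n → X) (f : Fin n → Fin n → Y)
    (he : IsGraph y₀ e) (hf : IsGraph y₀ f) :
    dGOSPA1' p C₁ CY v e w f ≤ dGOSPA2' y₀ p C₂ v e w f := by
  have hC1p : 0 ≤ C₁ ^ p := le_trans (by positivity) hC₁
  unfold dGOSPA1' dGOSPA2'
  split_ifs with h
  · exact dGOSPA1_le_dGOSPA2_aux y₀ p C₁ C₂ CY hp hCY0 hC1p hC₁₂ h v e w f
  · exact dGOSPA1_le_dGOSPA2_aux y₀ p C₁ C₂ CY hp hCY0 hC1p hC₁₂ (le_of_not_ge h) w f v e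
end

section
/- Let (X,d_X) and (Y,d_Y) be pseudometric spaces with diam(X) ≤ C_X and diam(Y) ≤ C_Y, let p ≥ 1, i ∈ {1,2}, and suppose the GTT penalty C satisfies C^p ≥ C_i^p (where C_i is the GOSPA_i penalty with its defining lower bound). Then for any attributed simple graphs ([m],v,e) and ([n],w,f): d_{G,A}(([m],v,e),([n],w,f)) ≥ d_{G,R_i}(([m],v,e),([n],w,f)). -/
open Finset

lemma inv_nm1_nonneg (n : ℕ) (hn : 1 ≤ n) : (0:ℝ) ≤ ((n:ℝ) - 1)⁻¹ := by
  apply inv_nonneg.2; have : (1:ℝ) ≤ n := by exact_mod_cast hn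
  linarith

lemma inv_nm1_le (n : ℕ) (hn : 1 ≤ n) : ((n:ℝ) - 1)⁻¹ ≤ (n:ℝ) := by
  rcases eq_or_lt_of_le hn with h | h
  · simp [← h]
  · have h2 : (2:ℝ) ≤ n := by exact_mod_cast h
    have h3 : ((n:ℝ) - 1)⁻¹ ≤ 1 := by
      rw [inv_le_one_iff₀]; right; linarith
    linarith

lemma key1 (a b c C1 : ℝ) (k m n : ℕ) (hk : k ≤ m) (hm : m ≤ n) (hn : 1 ≤ n)
    (hb : 0 ≤ b) (hc : 0 ≤ c) (h1 : b + (1/2) * c ≤ C1) (h1a : C1 ≤ a) :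
    ((n:ℝ) - m) * C1 + ((m:ℝ) - k) * b
      + (1/2) * ((n:ℝ) - 1)⁻¹ * (((m:ℝ) * n - (k:ℝ) * k) * c)
      ≤ (n:ℝ) * (((m:ℝ) + n - 2 * k) * a) := by
  have hkm : (k:ℝ) ≤ m := by exact_mod_cast hk
  have hmn : (m:ℝ) ≤ n := by exact_mod_cast hm
  have ha0 : 0 ≤ a := by linarith
  rcases eq_or_lt_of_le hn with h | h
  · -- n = 1
    have hn1 : n = 1 := h.symm
    subst hn1
    interval_cases m <;> interval_cases k <;> norm_num <;> nlinarith
  · have h2r : (2:ℝ) ≤ n := by exact_mod_cast h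
    have hd0 : (0:ℝ) < (n:ℝ) - 1 := by linarith
    rcases eq_or_lt_of_le (hk.trans hm) with hkn | hkn
    · -- k = n, hence k = m = n
      have hmk : m = n := le_antisymm hm (hkn ▸ hk)
      subst hmk
      subst hkn
      have hz : (k:ℝ) * k - (k:ℝ) * k = 0 := by ring
      simp only [sub_self, zero_mul, mul_zero, add_zero, zero_add]
      nlinarith [mul_nonneg (le_of_lt hd0) hc]
    · have hknr : (k:ℝ) ≤ (n:ℝ) - 1 := by
        have : (k:ℝ) + 1 ≤ n := by exact_mod_cast hkn
        linarith
      have hbound : ((n:ℝ) - 1)⁻¹ * ((m:ℝ) * n - (k:ℝ) * k)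
          ≤ 2 * ((m:ℝ) - k) + ((n:ℝ) - k) := by
        rw [inv_mul_le_iff₀ hd0]
        nlinarith [mul_nonneg (by linarith : (0:ℝ) ≤ (m:ℝ)-k) (by linarith : (0:ℝ) ≤ (n:ℝ)-2),
          mul_nonneg (by linarith : (0:ℝ) ≤ (n:ℝ)-k) (by linarith : (0:ℝ) ≤ (n:ℝ)-1-k)]
      have hstep : (1/2) * (((n:ℝ) - 1)⁻¹ * ((m:ℝ) * n - (k:ℝ) * k)) * c
          ≤ (1/2) * (2 * ((m:ℝ) - k) + ((n:ℝ) - k)) * c := by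
        apply mul_le_mul_of_nonneg_right _ hc
        apply mul_le_mul_of_nonneg_left hbound (by norm_num)
      have hc2a : c ≤ 2 * a := by linarith
      nlinarith [mul_nonneg (mul_nonneg (by linarith : (0:ℝ) ≤ (n:ℝ)-2) (by linarith : (0:ℝ) ≤ (m:ℝ)-k)) ha0,
        mul_nonneg (mul_nonneg (by linarith : (0:ℝ) ≤ (n:ℝ)-2) (by linarith : (0:ℝ) ≤ (n:ℝ)-k)) ha0,
        mul_nonneg (by linarith : (0:ℝ) ≤ (m:ℝ)-k) (by linarith : 0 ≤ a - C1),
        mul_nonneg (by linarith : (0:ℝ) ≤ n-(m:ℝ)) (by linarith : 0 ≤ a - C1),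
        mul_nonneg (by linarith : (0:ℝ) ≤ (m:ℝ)-k) hb,
        mul_nonneg (by linarith : (0:ℝ) ≤ (m:ℝ)-k) hc,
        mul_nonneg (by linarith : (0:ℝ) ≤ (n:ℝ)-k) hc,
        mul_nonneg (by linarith : (0:ℝ) ≤ (m:ℝ)-k) (by linarith : 0 ≤ 2*a - (b+c)),
        mul_nonneg (by linarith : (0:ℝ) ≤ (n:ℝ)-k) (by linarith : 0 ≤ 2*a - c)]

lemma key2 (a b c C2 : ℝ) (k m n : ℕ) (hk : k ≤ m) (hm : m ≤ n) (hn : 1 ≤ n)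
    (hb : 0 ≤ b) (hc : 0 ≤ c) (h1 : b + c ≤ C2) (h1a : C2 ≤ a) :
    ((n:ℝ) - m) * C2 + ((m:ℝ) - k) * b
      + (1/2) * ((n:ℝ) - 1)⁻¹ * (((n:ℝ) * ((n:ℝ)-1) - (k:ℝ) * ((k:ℝ)-1)) * c)
      ≤ (n:ℝ) * (((m:ℝ) + n - 2 * k) * a) := by
  have hkm : (k:ℝ) ≤ m := by exact_mod_cast hk
  have hmn : (m:ℝ) ≤ n := by exact_mod_cast hm
  have ha0 : 0 ≤ a := by linarith
  rcases eq_or_lt_of_le hn with h | h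
  · have hn1 : n = 1 := h.symm
    subst hn1
    interval_cases m <;> interval_cases k <;> norm_num <;> nlinarith
  · have h2r : (2:ℝ) ≤ n := by exact_mod_cast h
    have hd0 : (0:ℝ) < (n:ℝ) - 1 := by linarith
    rcases eq_or_lt_of_le (hk.trans hm) with hkn | hkn
    · -- k = n hence m = n
      have hmk : m = n := le_antisymm hm (hkn ▸ hk)
      subst hmk
      subst hkn
      simp only [sub_self, zero_mul, mul_zero, add_zero, zero_add]
      nlinarith [mul_nonneg (le_of_lt hd0) hc]
    · have hknr : (k:ℝ) ≤ (n:ℝ) - 1 := by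
        have : (k:ℝ) + 1 ≤ n := by exact_mod_cast hkn
        linarith
      have hbound : ((n:ℝ) - 1)⁻¹ * ((n:ℝ) * ((n:ℝ)-1) - (k:ℝ) * ((k:ℝ)-1))
          ≤ 2 * ((n:ℝ) - k) := by
        rw [inv_mul_le_iff₀ hd0]
        nlinarith [mul_nonneg (by linarith : (0:ℝ) ≤ (n:ℝ)-k) (by linarith : (0:ℝ) ≤ (n:ℝ)-1-k)]
      have hstep : (1/2) * (((n:ℝ) - 1)⁻¹ * ((n:ℝ) * ((n:ℝ)-1) - (k:ℝ) * ((k:ℝ)-1))) * c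
          ≤ (1/2) * (2 * ((n:ℝ) - k)) * c := by
        apply mul_le_mul_of_nonneg_right _ hc
        apply mul_le_mul_of_nonneg_left hbound (by norm_num)
      nlinarith [mul_nonneg (mul_nonneg (by linarith : (0:ℝ) ≤ (n:ℝ)-2) (by linarith : (0:ℝ) ≤ (m:ℝ)-k)) ha0,
        mul_nonneg (mul_nonneg (by linarith : (0:ℝ) ≤ (n:ℝ)-2) (by linarith : (0:ℝ) ≤ (n:ℝ)-k)) ha0,
        mul_nonneg (by linarith : (0:ℝ) ≤ (m:ℝ)-k) (by linarith : 0 ≤ a - C2),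
        mul_nonneg (by linarith : (0:ℝ) ≤ n-(m:ℝ)) (by linarith : 0 ≤ a - C2),
        mul_nonneg (by linarith : (0:ℝ) ≤ (m:ℝ)-k) (by linarith : 0 ≤ a - b),
        mul_nonneg (by linarith : (0:ℝ) ≤ (n:ℝ)-k) (by linarith : 0 ≤ a - c),
        mul_nonneg (by linarith : (0:ℝ) ≤ (m:ℝ)-k) hc]
open Finset

lemma rpow_helper (p : ℝ) (hp : 1 ≤ p) (n : ℕ) (G A : ℝ) (hG : 0 ≤ G)
    (hA : 0 ≤ A) (h : G ≤ n * A) :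
    ((n:ℝ) ^ (1/p))⁻¹ * G ^ (1/p) ≤ A ^ (1/p) := by
  have hp0 : (0:ℝ) < p := by linarith
  have hip : (0:ℝ) ≤ 1/p := by positivity
  rcases Nat.eq_zero_or_pos n with h0 | h0
  · subst h0
    have hG0 : G = 0 := le_antisymm (by simpa using h) hG
    subst hG0
    rw [Real.zero_rpow (by positivity : 1/p ≠ 0)]
    simp [Real.rpow_nonneg hA]
  · have hn0 : (0:ℝ) < n := by exact_mod_cast h0
    rw [← Real.inv_rpow (le_of_lt hn0), ← Real.mul_rpow (by positivity) hG]
    apply Real.rpow_le_rpow (by positivity) _ hip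
    rw [inv_mul_le_iff₀ hn0]
    exact h

lemma sum_diag_ite {α : Type*} [DecidableEq α] (s : Finset α) (c : ℝ) :
    ∑ i ∈ s, ∑ j ∈ s, (if i = j then (0:ℝ) else c)
      = (s.card : ℝ) * ((s.card : ℝ) - 1) * c := by
  have h1 : ∀ i ∈ s, ∑ j ∈ s, (if i = j then (0:ℝ) else c) = (s.card : ℝ) * c - c := by
    intro i hi
    have : ∀ j, (if i = j then (0:ℝ) else c) = c - (if i = j then c else 0) := by
      intro j; split <;> ring
    simp_rw [this, Finset.sum_sub_distrib, Finset.sum_const, Finset.sum_ite_eq, if_pos hi]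
    push_cast; ring
  rw [Finset.sum_congr rfl h1, Finset.sum_const]
  push_cast; ring

section Main
variable {X Y : Type*} [PseudoMetricSpace X] [PseudoMetricSpace Y]

lemma gospa1_le_gtt (y₀ : Y) (p C C₁ CX CY : ℝ) (hp : 1 ≤ p)
    (hCX0 : 0 ≤ CX) (hCY0 : 0 ≤ CY)
    (hdX : ∀ x x' : X, dist x x' ≤ CX) (hdY : ∀ y y' : Y, dist y y' ≤ CY)
    (hC₁ : CX ^ p + (1/2) * CY ^ p ≤ C₁ ^ p) (hCC : C₁ ^ p ≤ C ^ p)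
    {m n : ℕ} (hmn : m ≤ n)
    (v : Fin m → X) (e : Fin m → Fin m → Y)
    (w : Fin n → X) (f : Fin n → Fin n → Y) :
    dGOSPA1 p C₁ CY hmn v e w f ≤ dGTT y₀ p C hmn v e w f := by
  have hp0 : (0:ℝ) < p := by linarith
  have hip : (0:ℝ) ≤ 1/p := by positivity
  have hCXp : (0:ℝ) ≤ CX ^ p := Real.rpow_nonneg hCX0 p
  have hCYp : (0:ℝ) ≤ CY ^ p := Real.rpow_nonneg hCY0 p
  have hC1p : (0:ℝ) ≤ C₁ ^ p := by linarith
  have hCp : (0:ℝ) ≤ C ^ p := le_trans hC1p hCC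
  have hDX : ∀ (x x' : X), dist x x' ^ p ≤ CX ^ p :=
    fun x x' => Real.rpow_le_rpow dist_nonneg (hdX x x') (by linarith)
  have hDY : ∀ (y y' : Y), dist y y' ^ p ≤ CY ^ p :=
    fun y y' => Real.rpow_le_rpow dist_nonneg (hdY y y') (by linarith)
  unfold dGOSPA1 dGTT
  apply Finset.le_inf'
  rintro ⟨I, π⟩ -
  have hkI : I.card ≤ m := by simpa using Finset.card_le_univ I
  have hkIr : (I.card : ℝ) ≤ m := by exact_mod_cast hkI
  have hmnr : (m:ℝ) ≤ n := by exact_mod_cast hmn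
  have h0 : (0:ℝ) ≤ ((n:ℝ) ^ (1/p))⁻¹ :=
    inv_nonneg.2 (Real.rpow_nonneg (Nat.cast_nonneg n) _)
  refine le_trans (mul_le_mul_of_nonneg_left
    (Finset.inf'_le _ (Finset.mem_univ π)) h0) ?_
  unfold gttVal
  dsimp only
  -- nonnegativity of A-side terms
  have hT2 : (0:ℝ) ≤ ∑ i ∈ I, dist (v i) (w (π (Fin.castLE hmn i))) ^ p :=
    Finset.sum_nonneg fun i _ => Real.rpow_nonneg dist_nonneg p
  have hT3 : (0:ℝ) ≤ ∑ i ∈ I, ∑ i' ∈ I,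
      dist (e i i') (f (π (Fin.castLE hmn i)) (π (Fin.castLE hmn i'))) ^ p :=
    Finset.sum_nonneg fun i _ => Finset.sum_nonneg fun i' _ => Real.rpow_nonneg dist_nonneg p
  have hT4 : (0:ℝ) ≤ ∑ q ∈ ((univ : Finset (Fin m × Fin m)) \ I ×ˢ I),
      dist (e q.1 q.2) y₀ ^ p :=
    Finset.sum_nonneg fun q _ => Real.rpow_nonneg dist_nonneg p
  have hT5 : (0:ℝ) ≤ ∑ q ∈ ((univ : Finset (Fin n × Fin n)) \
      ((I.image fun i => π (Fin.castLE hmn i)) ×ˢ (I.image fun i => π (Fin.castLE hmn i)))),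
      dist y₀ (f q.1 q.2) ^ p :=
    Finset.sum_nonneg fun q _ => Real.rpow_nonneg dist_nonneg p
  have hT1 : (0:ℝ) ≤ ((m:ℝ) + n - 2 * I.card) * C ^ p :=
    mul_nonneg (by linarith) hCp
  apply rpow_helper p hp n
  · -- 0 ≤ G body
    rcases Nat.eq_zero_or_pos n with h0' | hn1
    · obtain rfl : n = 0 := h0'
      obtain rfl : m = 0 := Nat.le_zero.mp hmn
      simp
    · have hn1r : (1:ℝ) ≤ n := by exact_mod_cast hn1
      have hd0 : (0:ℝ) ≤ ((n:ℝ) - 1)⁻¹ := inv_nm1_nonneg n hn1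
      apply add_nonneg (add_nonneg (mul_nonneg (by linarith) hC1p)
        (Finset.sum_nonneg fun i _ => Real.rpow_nonneg dist_nonneg p))
      apply mul_nonneg (by positivity)
      apply Finset.sum_nonneg
      intro i _
      apply add_nonneg
      · exact Finset.sum_nonneg fun i' _ => Real.rpow_nonneg dist_nonneg p
      · exact mul_nonneg (by linarith) hCYp
  · -- 0 ≤ A body
    have := add_nonneg (add_nonneg (add_nonneg (add_nonneg hT1 hT2)
      (mul_nonneg (by norm_num : (0:ℝ) ≤ 1/2) hT3))
      (mul_nonneg (by norm_num : (0:ℝ) ≤ 1/2) hT4))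
      (mul_nonneg (by norm_num : (0:ℝ) ≤ 1/2) hT5)
    linarith
  · -- key: G ≤ n * A
    rcases Nat.eq_zero_or_pos n with h0' | hn1
    · obtain rfl : n = 0 := h0'
      obtain rfl : m = 0 := Nat.le_zero.mp hmn
      simp
    · have hn1r : (1:ℝ) ≤ n := by exact_mod_cast hn1
      have hd0 : (0:ℝ) ≤ ((n:ℝ) - 1)⁻¹ := inv_nm1_nonneg n hn1
      -- vertex sum bound
      have hSX : ∑ i : Fin m, dist (v i) (w (π (Fin.castLE hmn i))) ^ p
          ≤ (∑ i ∈ I, dist (v i) (w (π (Fin.castLE hmn i))) ^ p)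
            + ((m:ℝ) - I.card) * CX ^ p := by
        rw [← Finset.sum_sdiff (Finset.subset_univ I)]
        have h1 : ∑ i ∈ (univ \ I), dist (v i) (w (π (Fin.castLE hmn i))) ^ p
            ≤ ((univ \ I).card : ℕ) • (CX ^ p) :=
          Finset.sum_le_card_nsmul _ _ _ (fun i _ => hDX _ _)
        have h2 : ((univ \ I).card : ℕ) = m - I.card := by
          rw [Finset.card_sdiff_of_subset (Finset.subset_univ I)]
          simp
        rw [h2, nsmul_eq_mul, Nat.cast_sub hkI] at h1
        linarith
      -- edge sum bound
      have hSY : ∑ i : Fin m, ∑ i' : Fin m,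
            dist (e i i') (f (π (Fin.castLE hmn i)) (π (Fin.castLE hmn i'))) ^ p
          ≤ (∑ i ∈ I, ∑ i' ∈ I,
              dist (e i i') (f (π (Fin.castLE hmn i)) (π (Fin.castLE hmn i'))) ^ p)
            + ((m:ℝ) * m - (I.card:ℝ) * I.card) * CY ^ p := by
        have hprod : ∑ i : Fin m, ∑ i' : Fin m,
              dist (e i i') (f (π (Fin.castLE hmn i)) (π (Fin.castLE hmn i'))) ^ p
            = ∑ q : Fin m × Fin m,
              dist (e q.1 q.2) (f (π (Fin.castLE hmn q.1)) (π (Fin.castLE hmn q.2))) ^ p :=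
          (Fintype.sum_prod_type (fun q : Fin m × Fin m =>
            dist (e q.1 q.2) (f (π (Fin.castLE hmn q.1)) (π (Fin.castLE hmn q.2))) ^ p)).symm
        have hsub : I ×ˢ I ⊆ (univ : Finset (Fin m × Fin m)) := Finset.subset_univ _
        rw [hprod, ← Finset.sum_sdiff hsub, Finset.sum_product]
        have h1 : ∑ q ∈ ((univ : Finset (Fin m × Fin m)) \ I ×ˢ I),
              dist (e q.1 q.2) (f (π (Fin.castLE hmn q.1)) (π (Fin.castLE hmn q.2))) ^ p
            ≤ (((univ : Finset (Fin m × Fin m)) \ I ×ˢ I).card : ℕ) • (CY ^ p) :=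
          Finset.sum_le_card_nsmul _ _ _ (fun q _ => hDY _ _)
        have h2 : (((univ : Finset (Fin m × Fin m)) \ I ×ˢ I).card : ℕ)
            = m * m - I.card * I.card := by
          rw [Finset.card_sdiff_of_subset hsub, Finset.card_product]
          simp
        rw [h2, nsmul_eq_mul, Nat.cast_sub (Nat.mul_le_mul hkI hkI)] at h1
        push_cast at h1
        linarith
      -- rearrange the GOSPA inner sum
      have hEdge : ∑ i : Fin m, ((∑ i' : Fin m,
              dist (e i i') (f (π (Fin.castLE hmn i)) (π (Fin.castLE hmn i'))) ^ p)
              + ((n:ℝ) - m) * CY ^ p)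
          = (∑ i : Fin m, ∑ i' : Fin m,
              dist (e i i') (f (π (Fin.castLE hmn i)) (π (Fin.castLE hmn i'))) ^ p)
            + (m:ℝ) * (((n:ℝ) - m) * CY ^ p) := by
        rw [Finset.sum_add_distrib, Finset.sum_const, Finset.card_univ]
        simp [nsmul_eq_mul]
      have hkey := key1 (C ^ p) (CX ^ p) (CY ^ p) (C₁ ^ p) I.card m n hkI hmn hn1
        hCXp hCYp hC₁ hCC
      have hfrac : ((n:ℝ) - 1)⁻¹ ≤ (n:ℝ) := inv_nm1_le n hn1
      -- abbreviate the big sums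
      set SXm := ∑ i : Fin m, dist (v i) (w (π (Fin.castLE hmn i))) ^ p with hSXm
      set SXI := ∑ i ∈ I, dist (v i) (w (π (Fin.castLE hmn i))) ^ p with hSXI
      set SYm := ∑ i : Fin m, ∑ i' : Fin m,
        dist (e i i') (f (π (Fin.castLE hmn i)) (π (Fin.castLE hmn i'))) ^ p with hSYm
      set SYI := ∑ i ∈ I, ∑ i' ∈ I,
        dist (e i i') (f (π (Fin.castLE hmn i)) (π (Fin.castLE hmn i'))) ^ p with hSYI
      set T4 := ∑ q ∈ ((univ : Finset (Fin m × Fin m)) \ I ×ˢ I),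
        dist (e q.1 q.2) y₀ ^ p with hT4d
      set T5 := ∑ q ∈ ((univ : Finset (Fin n × Fin n)) \
        ((I.image fun i => π (Fin.castLE hmn i)) ×ˢ (I.image fun i => π (Fin.castLE hmn i)))),
        dist y₀ (f q.1 q.2) ^ p with hT5d
      set SEdge := ∑ i : Fin m, ((∑ i' : Fin m,
        dist (e i i') (f (π (Fin.castLE hmn i)) (π (Fin.castLE hmn i'))) ^ p)
        + ((n:ℝ) - m) * CY ^ p) with hSEdge
      have hA4 : ((n:ℝ) - 1)⁻¹ * SYI ≤ (n:ℝ) * SYI :=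
        mul_le_mul_of_nonneg_right hfrac hT3
      have hA5 : SXI ≤ (n:ℝ) * SXI := le_mul_of_one_le_left hT2 hn1r
      have hB2 : (1/2) * ((n:ℝ) - 1)⁻¹ * SEdge
          ≤ (1/2) * ((n:ℝ) - 1)⁻¹
            * (SYI + ((m:ℝ) * n - (I.card:ℝ) * I.card) * CY ^ p) := by
        have h' : SEdge ≤ SYI + ((m:ℝ) * n - (I.card:ℝ) * I.card) * CY ^ p := by
          rw [hEdge]; linarith
        exact mul_le_mul_of_nonneg_left h' (by positivity)
      have hB2' : (1/2) * ((n:ℝ) - 1)⁻¹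
            * (SYI + ((m:ℝ) * n - (I.card:ℝ) * I.card) * CY ^ p)
          = (1/2) * (((n:ℝ) - 1)⁻¹ * SYI)
            + (1/2) * (((n:ℝ) - 1)⁻¹ * (((m:ℝ) * n - (I.card:ℝ) * I.card) * CY ^ p)) := by
        ring
      have hn0r : (0:ℝ) ≤ n := Nat.cast_nonneg n
      linarith [hB2, hB2', hkey, hA4, hA5, hSX, mul_nonneg hn0r hT4, mul_nonneg hn0r hT5]
lemma gospa2_le_gtt (y₀ : Y) (p C C₂ CX CY : ℝ) (hp : 1 ≤ p)
    (hCX0 : 0 ≤ CX) (hCY0 : 0 ≤ CY)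
    (hdX : ∀ x x' : X, dist x x' ≤ CX) (hdY : ∀ y y' : Y, dist y y' ≤ CY)
    (hC₂ : CX ^ p + CY ^ p ≤ C₂ ^ p) (hCC : C₂ ^ p ≤ C ^ p)
    {m n : ℕ} (hmn : m ≤ n)
    (v : Fin m → X) (e : Fin m → Fin m → Y)
    (w : Fin n → X) (f : Fin n → Fin n → Y)
    (he : IsGraph y₀ e) (hf : IsGraph y₀ f) :
    dGOSPA2 y₀ p C₂ hmn v e w f ≤ dGTT y₀ p C hmn v e w f := by
  have hp0 : (0:ℝ) < p := by linarith
  have hip : (0:ℝ) ≤ 1/p := by positivity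
  have hCXp : (0:ℝ) ≤ CX ^ p := Real.rpow_nonneg hCX0 p
  have hCYp : (0:ℝ) ≤ CY ^ p := Real.rpow_nonneg hCY0 p
  have hC2p : (0:ℝ) ≤ C₂ ^ p := by linarith
  have hCp : (0:ℝ) ≤ C ^ p := le_trans hC2p hCC
  have hDX : ∀ (x x' : X), dist x x' ^ p ≤ CX ^ p :=
    fun x x' => Real.rpow_le_rpow dist_nonneg (hdX x x') (by linarith)
  have hDY : ∀ (y y' : Y), dist y y' ^ p ≤ CY ^ p :=
    fun y y' => Real.rpow_le_rpow dist_nonneg (hdY y y') (by linarith)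
  unfold dGOSPA2 dGTT
  apply Finset.le_inf'
  rintro ⟨I, π⟩ -
  have hkI : I.card ≤ m := by simpa using Finset.card_le_univ I
  have hkIr : (I.card : ℝ) ≤ m := by exact_mod_cast hkI
  have hmnr : (m:ℝ) ≤ n := by exact_mod_cast hmn
  have h0 : (0:ℝ) ≤ ((n:ℝ) ^ (1/p))⁻¹ :=
    inv_nonneg.2 (Real.rpow_nonneg (Nat.cast_nonneg n) _)
  refine le_trans (mul_le_mul_of_nonneg_left
    (Finset.inf'_le _ (Finset.mem_univ π)) h0) ?_
  unfold gttVal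
  dsimp only
  have hT2 : (0:ℝ) ≤ ∑ i ∈ I, dist (v i) (w (π (Fin.castLE hmn i))) ^ p :=
    Finset.sum_nonneg fun i _ => Real.rpow_nonneg dist_nonneg p
  have hT3 : (0:ℝ) ≤ ∑ i ∈ I, ∑ i' ∈ I,
      dist (e i i') (f (π (Fin.castLE hmn i)) (π (Fin.castLE hmn i'))) ^ p :=
    Finset.sum_nonneg fun i _ => Finset.sum_nonneg fun i' _ => Real.rpow_nonneg dist_nonneg p
  have hT4 : (0:ℝ) ≤ ∑ q ∈ ((univ : Finset (Fin m × Fin m)) \ I ×ˢ I),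
      dist (e q.1 q.2) y₀ ^ p :=
    Finset.sum_nonneg fun q _ => Real.rpow_nonneg dist_nonneg p
  have hT5 : (0:ℝ) ≤ ∑ q ∈ ((univ : Finset (Fin n × Fin n)) \
      ((I.image fun i => π (Fin.castLE hmn i)) ×ˢ (I.image fun i => π (Fin.castLE hmn i)))),
      dist y₀ (f q.1 q.2) ^ p :=
    Finset.sum_nonneg fun q _ => Real.rpow_nonneg dist_nonneg p
  have hT1 : (0:ℝ) ≤ ((m:ℝ) + n - 2 * I.card) * C ^ p :=
    mul_nonneg (by linarith) hCp
  have hTnn : ∀ i i' : Fin n,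
      (0:ℝ) ≤ (if h : (i : ℕ) < m ∧ (i' : ℕ) < m
        then dist (e ⟨i.1, h.1⟩ ⟨i'.1, h.2⟩) (f (π i) (π i')) ^ p
        else dist y₀ (f (π i) (π i')) ^ p) := by
    intro i i'
    split <;> exact Real.rpow_nonneg dist_nonneg p
  apply rpow_helper p hp n
  · -- 0 ≤ G body
    rcases Nat.eq_zero_or_pos n with h0' | hn1
    · obtain rfl : n = 0 := h0'
      obtain rfl : m = 0 := Nat.le_zero.mp hmn
      simp
    · have hn1r : (1:ℝ) ≤ n := by exact_mod_cast hn1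
      have hd0 : (0:ℝ) ≤ ((n:ℝ) - 1)⁻¹ := inv_nm1_nonneg n hn1
      apply add_nonneg (add_nonneg (mul_nonneg (by linarith) hC2p)
        (Finset.sum_nonneg fun i _ => Real.rpow_nonneg dist_nonneg p))
      apply mul_nonneg (by positivity)
      exact Finset.sum_nonneg fun i _ => Finset.sum_nonneg fun i' _ => hTnn i i'
  · -- 0 ≤ A body
    have := add_nonneg (add_nonneg (add_nonneg (add_nonneg hT1 hT2)
      (mul_nonneg (by norm_num : (0:ℝ) ≤ 1/2) hT3))
      (mul_nonneg (by norm_num : (0:ℝ) ≤ 1/2) hT4))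
      (mul_nonneg (by norm_num : (0:ℝ) ≤ 1/2) hT5)
    linarith
  · -- key inequality
    rcases Nat.eq_zero_or_pos n with h0' | hn1
    · obtain rfl : n = 0 := h0'
      obtain rfl : m = 0 := Nat.le_zero.mp hmn
      simp
    · have hn1r : (1:ℝ) ≤ n := by exact_mod_cast hn1
      have hd0 : (0:ℝ) ≤ ((n:ℝ) - 1)⁻¹ := inv_nm1_nonneg n hn1
      -- vertex sum bound
      have hSX : ∑ i : Fin m, dist (v i) (w (π (Fin.castLE hmn i))) ^ p
          ≤ (∑ i ∈ I, dist (v i) (w (π (Fin.castLE hmn i))) ^ p)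
            + ((m:ℝ) - I.card) * CX ^ p := by
        rw [← Finset.sum_sdiff (Finset.subset_univ I)]
        have h1 : ∑ i ∈ (univ \ I), dist (v i) (w (π (Fin.castLE hmn i))) ^ p
            ≤ ((univ \ I).card : ℕ) • (CX ^ p) :=
          Finset.sum_le_card_nsmul _ _ _ (fun i _ => hDX _ _)
        have h2 : ((univ \ I).card : ℕ) = m - I.card := by
          rw [Finset.card_sdiff_of_subset (Finset.subset_univ I)]
          simp
        rw [h2, nsmul_eq_mul, Nat.cast_sub hkI] at h1
        linarith
      -- edge sum bound
      set J : Finset (Fin n) := I.image (Fin.castLE hmn) with hJ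
      have hinj : Function.Injective (Fin.castLE hmn) := Fin.castLE_injective hmn
      have hJcard : J.card = I.card := Finset.card_image_of_injective I hinj
      set T : Fin n → Fin n → ℝ := fun i i' =>
        (if h : (i : ℕ) < m ∧ (i' : ℕ) < m
          then dist (e ⟨i.1, h.1⟩ ⟨i'.1, h.2⟩) (f (π i) (π i')) ^ p
          else dist y₀ (f (π i) (π i')) ^ p) with hT
      have hTsplit : ∑ i : Fin n, ∑ i' : Fin n, T i i'
          = (∑ q ∈ ((univ : Finset (Fin n × Fin n)) \ J ×ˢ J), T q.1 q.2)
            + ∑ q ∈ J ×ˢ J, T q.1 q.2 := by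
        rw [Finset.sum_sdiff (Finset.subset_univ (J ×ˢ J))]
        exact (Fintype.sum_prod_type (fun q : Fin n × Fin n => T q.1 q.2)).symm
      have hTJ : ∑ q ∈ J ×ˢ J, T q.1 q.2
          = ∑ i ∈ I, ∑ i' ∈ I,
              dist (e i i') (f (π (Fin.castLE hmn i)) (π (Fin.castLE hmn i'))) ^ p := by
        rw [Finset.sum_product, hJ]
        rw [Finset.sum_image (fun a _ b _ hab => hinj hab)]
        apply Finset.sum_congr rfl
        intro a _
        rw [Finset.sum_image (fun a _ b _ hab => hinj hab)]
        apply Finset.sum_congr rfl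
        intro b _
        have hc : ((Fin.castLE hmn a : Fin n) : ℕ) < m ∧ ((Fin.castLE hmn b : Fin n) : ℕ) < m :=
          ⟨by simpa using a.isLt, by simpa using b.isLt⟩
        rw [hT]
        dsimp only
        rw [dif_pos hc]
        congr 2 <;> exact Fin.ext (by simp)
      have hTrest : ∑ q ∈ ((univ : Finset (Fin n × Fin n)) \ J ×ˢ J), T q.1 q.2
          ≤ ((n:ℝ) * ((n:ℝ) - 1) - (I.card:ℝ) * ((I.card:ℝ) - 1)) * CY ^ p := by
        have hb : ∀ q ∈ ((univ : Finset (Fin n × Fin n)) \ J ×ˢ J),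
            T q.1 q.2 ≤ (if q.1 = q.2 then (0:ℝ) else CY ^ p) := by
          rintro ⟨i, i'⟩ -
          dsimp only
          by_cases hq : i = i'
          · subst hq
            rw [if_pos rfl, hT]
            dsimp only
            split
            · rw [he.2, hf.2, dist_self, Real.zero_rpow (by positivity : p ≠ 0)]
            · rw [hf.2, dist_self, Real.zero_rpow (by positivity : p ≠ 0)]
          · rw [if_neg hq, hT]
            dsimp only
            split
            · exact hDY _ _
            · exact hDY _ _
        refine le_trans (Finset.sum_le_sum hb) ?_
        have hsd := Finset.sum_sdiff (Finset.subset_univ (J ×ˢ J))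
          (f := fun q : Fin n × Fin n => if q.1 = q.2 then (0:ℝ) else CY ^ p)
        have huniv : ∑ q : Fin n × Fin n, (if q.1 = q.2 then (0:ℝ) else CY ^ p)
            = (n:ℝ) * ((n:ℝ) - 1) * CY ^ p := by
          rw [Fintype.sum_prod_type (fun q : Fin n × Fin n =>
            if q.1 = q.2 then (0:ℝ) else CY ^ p)]
          have := sum_diag_ite (univ : Finset (Fin n)) (CY ^ p)
          simpa using this
        have hJJ : ∑ q ∈ J ×ˢ J, (if q.1 = q.2 then (0:ℝ) else CY ^ p)
            = (I.card:ℝ) * ((I.card:ℝ) - 1) * CY ^ p := by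
          rw [Finset.sum_product]
          have := sum_diag_ite J (CY ^ p)
          rw [hJcard] at this
          exact this
        rw [huniv, hJJ] at hsd
        linarith
      have hkey := key2 (C ^ p) (CX ^ p) (CY ^ p) (C₂ ^ p) I.card m n hkI hmn hn1
        hCXp hCYp hC₂ hCC
      have hfrac : ((n:ℝ) - 1)⁻¹ ≤ (n:ℝ) := inv_nm1_le n hn1
      set SXm := ∑ i : Fin m, dist (v i) (w (π (Fin.castLE hmn i))) ^ p with hSXm
      set SXI := ∑ i ∈ I, dist (v i) (w (π (Fin.castLE hmn i))) ^ p with hSXI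
      set SYI := ∑ i ∈ I, ∑ i' ∈ I,
        dist (e i i') (f (π (Fin.castLE hmn i)) (π (Fin.castLE hmn i'))) ^ p with hSYI
      set T4 := ∑ q ∈ ((univ : Finset (Fin m × Fin m)) \ I ×ˢ I),
        dist (e q.1 q.2) y₀ ^ p with hT4d
      set T5 := ∑ q ∈ ((univ : Finset (Fin n × Fin n)) \
        ((I.image fun i => π (Fin.castLE hmn i)) ×ˢ (I.image fun i => π (Fin.castLE hmn i)))),
        dist y₀ (f q.1 q.2) ^ p with hT5d
      set Tsum := ∑ i : Fin n, ∑ i' : Fin n, T i i' with hTsum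
      have hTbound : Tsum ≤ SYI
          + ((n:ℝ) * ((n:ℝ) - 1) - (I.card:ℝ) * ((I.card:ℝ) - 1)) * CY ^ p := by
        rw [hTsplit, hTJ]
        linarith [hTrest]
      have hA4 : ((n:ℝ) - 1)⁻¹ * SYI ≤ (n:ℝ) * SYI :=
        mul_le_mul_of_nonneg_right hfrac hT3
      have hA5 : SXI ≤ (n:ℝ) * SXI := le_mul_of_one_le_left hT2 hn1r
      have hB2 : (1/2) * ((n:ℝ) - 1)⁻¹ * Tsum
          ≤ (1/2) * ((n:ℝ) - 1)⁻¹
            * (SYI + ((n:ℝ) * ((n:ℝ) - 1) - (I.card:ℝ) * ((I.card:ℝ) - 1)) * CY ^ p) :=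
        mul_le_mul_of_nonneg_left hTbound (by positivity)
      have hB2' : (1/2) * ((n:ℝ) - 1)⁻¹
            * (SYI + ((n:ℝ) * ((n:ℝ) - 1) - (I.card:ℝ) * ((I.card:ℝ) - 1)) * CY ^ p)
          = (1/2) * (((n:ℝ) - 1)⁻¹ * SYI)
            + (1/2) * (((n:ℝ) - 1)⁻¹
              * (((n:ℝ) * ((n:ℝ) - 1) - (I.card:ℝ) * ((I.card:ℝ) - 1)) * CY ^ p)) := by
        ring
      have hn0r : (0:ℝ) ≤ n := Nat.cast_nonneg n
      linarith [hB2, hB2', hkey, hA4, hA5, hSX, mul_nonneg hn0r hT4, mul_nonneg hn0r hT5]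



end Main

/-- Proposition: the GTT distance dominates the GOSPA distances.
If the GTT penalty satisfies `C^p ≥ C_i^p` (for the GOSPA penalty `C_i` with its
defining lower bound), then `d_{G,A} ≥ d_{G,R_i}` for `i = 1, 2` and any two attributed
simple graphs. -/
theorem dGOSPA_le_dGTT
    {X Y : Type*} [PseudoMetricSpace X] [PseudoMetricSpace Y]
    (y₀ : Y) (p C C₁ C₂ CX CY : ℝ) (hp : 1 ≤ p) (hC : 0 < C)
    (hCX0 : 0 ≤ CX) (hCY0 : 0 ≤ CY)
    (hdX : ∀ x x' : X, dist x x' ≤ CX) (hdY : ∀ y y' : Y, dist y y' ≤ CY)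
    (hC₁ : CX ^ p + (1/2) * CY ^ p ≤ C₁ ^ p)
    (hC₂ : CX ^ p + CY ^ p ≤ C₂ ^ p)
    {m n : ℕ}
    (v : Fin m → X) (e : Fin m → Fin m → Y)
    (w : Fin n → X) (f : Fin n → Fin n → Y)
    (he : IsGraph y₀ e) (hf : IsGraph y₀ f) :
    (C₁ ^ p ≤ C ^ p → dGOSPA1' p C₁ CY v e w f ≤ dGTT' y₀ p C v e w f) ∧
    (C₂ ^ p ≤ C ^ p → dGOSPA2' y₀ p C₂ v e w f ≤ dGTT' y₀ p C v e w f) := by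
  constructor
  · intro h
    unfold dGOSPA1' dGTT'
    split_ifs with hmn
    · exact gospa1_le_gtt y₀ p C C₁ CX CY hp hCX0 hCY0 hdX hdY hC₁ h hmn v e w f
    · exact gospa1_le_gtt y₀ p C C₁ CX CY hp hCX0 hCY0 hdX hdY hC₁ h
        (le_of_not_ge hmn) w f v e
  · intro h
    unfold dGOSPA2' dGTT'
    split_ifs with hmn
    · exact gospa2_le_gtt y₀ p C C₂ CX CY hp hCX0 hCY0 hdX hdY hC₂ h hmn v e w f he hf
    · exact gospa2_le_gtt y₀ p C C₂ CX CY hp hCX0 hCY0 hdX hdY hC₂ h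
        (le_of_not_ge hmn) w f v e hf he
end

section
/- Suppose p = 1, or p > 1 and d_Y(y₁,y₂) ≤ max{d_Y(y₁,y₀), d_Y(y₀,y₂)} for all y₁,y₂ ∈ Y. Let ([m],v,e) and ([n],w,f) be attributed simple graphs with m ≤ n ≤ l and n ≥ 1. Extend X by two auxiliary points x_*, x'_* with d_X(x_*,x)^p = C₂^p − C_Y^p and d_X(x'_*,x)^p = d_X(x_*,x'_*)^p = C₂^p for all x ∈ X. Fill up ([m],v,e) to size l by setting v_i = x_* for m+1 ≤ i ≤ l and e_{ii'} = y₀ whenever max{i,i'} ≥ m+1, and fill up ([n],w,f) to size l by setting w_i = x'_* for n+1 ≤ i ≤ l and f_{ii'} = y₀ whenever max{i,i'} ≥ n+1. Then d_{G,R₂}(([m],v,e),([n],w,f)) ≤ (d_{G,R₂}(([l],v,e),([l],w,f))^p + C_Y^p·(n−m)/n)^{1/p}. -/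
open Finset

lemma aux_card_filter_lt {n k : ℕ} (h : k ≤ n) :
    (Finset.univ.filter (fun j : Fin n => (j:ℕ) < k)).card = k := by
  have himg : Finset.univ.filter (fun j : Fin n => (j:ℕ) < k)
      = Finset.univ.image (Fin.castLE h) := by
    ext j
    simp only [Finset.mem_filter, Finset.mem_univ, true_and, Finset.mem_image]
    constructor
    · intro hj; exact ⟨⟨j.1, hj⟩, Fin.ext rfl⟩
    · rintro ⟨i, rfl⟩; exact i.isLt
  rw [himg, Finset.card_image_of_injective _ (Fin.castLE_injective h), Finset.card_univ,
    Fintype.card_fin]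

lemma aux_card_filter_perm {n l : ℕ} (h : n ≤ l) (π' : Equiv.Perm (Fin l)) :
    (Finset.univ.filter (fun j : Fin l => ((π' j):ℕ) < n)).card = n := by
  have himg : Finset.univ.filter (fun j : Fin l => ((π' j):ℕ) < n)
      = (Finset.univ.filter (fun j : Fin l => (j:ℕ) < n)).image π'.symm := by
    ext j
    simp only [Finset.mem_filter, Finset.mem_univ, true_and, Finset.mem_image]
    constructor
    · intro hj; exact ⟨π' j, hj, π'.symm_apply_apply j⟩
    · rintro ⟨k, hk, rfl⟩; simpa using hk
  rw [himg, Finset.card_image_of_injective _ π'.symm.injective, aux_card_filter_lt h]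

lemma aux_exists_sigma {m n l : ℕ} (hmn : m ≤ n) (hnl : n ≤ l) (π' : Equiv.Perm (Fin l)) :
    ∃ σ : Fin n → Fin l, Function.Injective σ ∧
      (∀ i, ((π' (σ i)) : ℕ) < n) ∧
      (∀ i : Fin n, ((i : ℕ) < m ∧ ((π' (Fin.castLE hnl i)) : ℕ) < n) → σ i = Fin.castLE hnl i) ∧
      (∀ i : Fin n, ¬((i : ℕ) < m ∧ ((π' (Fin.castLE hnl i)) : ℕ) < n) → m ≤ ((σ i) : ℕ)) := by
  classical
  set An : Finset (Fin n) :=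
    Finset.univ.filter (fun i => (i:ℕ) < m ∧ ((π' (Fin.castLE hnl i)):ℕ) < n) with hAn
  set T : Finset (Fin l) := Finset.univ.filter (fun j => ((π' j):ℕ) < n) with hT
  have hsub : An.image (Fin.castLE hnl) ⊆ T := by
    intro j hj
    rw [Finset.mem_image] at hj
    obtain ⟨i, hi, rfl⟩ := hj
    exact Finset.mem_filter.mpr ⟨Finset.mem_univ _, (Finset.mem_filter.mp hi).2.2⟩
  have hcT : T.card = n := aux_card_filter_perm hnl π'
  have hcards : (Finset.univ \ An).card = (T \ An.image (Fin.castLE hnl)).card := by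
    rw [Finset.card_sdiff_of_subset (Finset.subset_univ An), Finset.card_sdiff_of_subset hsub, Finset.card_univ,
      Fintype.card_fin, hcT, Finset.card_image_of_injective _ (Fin.castLE_injective hnl)]
  let ε := Finset.equivOfCardEq hcards
  have hmemB : ∀ i : Fin n, i ∉ An → i ∈ Finset.univ \ An := by
    intro i h; rw [Finset.mem_sdiff]; exact ⟨Finset.mem_univ _, h⟩
  refine ⟨fun i => if h : i ∈ An then Fin.castLE hnl i
    else (ε ⟨i, hmemB i h⟩ : Fin l), ?_, ?_, ?_, ?_⟩
  · -- injective
    intro i i' hii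
    dsimp only at hii
    by_cases h : i ∈ An <;> by_cases h' : i' ∈ An
    · rw [dif_pos h, dif_pos h'] at hii
      exact Fin.castLE_injective hnl hii
    · rw [dif_pos h, dif_neg h'] at hii
      exfalso
      have h2 := (ε ⟨i', hmemB i' h'⟩).2
      rw [Finset.mem_sdiff] at h2
      exact h2.2 (hii ▸ Finset.mem_image_of_mem _ h)
    · rw [dif_neg h, dif_pos h'] at hii
      exfalso
      have h2 := (ε ⟨i, hmemB i h⟩).2
      rw [Finset.mem_sdiff] at h2
      exact h2.2 (hii ▸ Finset.mem_image_of_mem _ h')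
    · rw [dif_neg h, dif_neg h'] at hii
      exact congrArg Subtype.val (ε.injective (Subtype.ext hii))
  · -- lands in T
    intro i
    dsimp only
    by_cases h : i ∈ An
    · rw [dif_pos h]
      exact (Finset.mem_filter.mp (hsub (Finset.mem_image_of_mem _ h))).2
    · rw [dif_neg h]
      have h2 := (Finset.mem_sdiff.mp (ε ⟨i, hmemB i h⟩).2).1
      exact (Finset.mem_filter.mp h2).2
  · -- fixes An
    intro i hi
    have h2 : i ∈ An := Finset.mem_filter.mpr ⟨Finset.mem_univ _, hi⟩
    dsimp only
    rw [dif_pos h2]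
  · -- outside An lands above m
    intro i hi
    have h : i ∉ An := fun hc => hi (Finset.mem_filter.mp hc).2
    dsimp only
    rw [dif_neg h]
    by_contra hlt
    push_neg at hlt
    have h2 := Finset.mem_sdiff.mp (ε ⟨i, hmemB i h⟩).2
    apply h2.2
    have hT' := (Finset.mem_filter.mp h2.1).2
    refine Finset.mem_image.mpr ⟨⟨((ε ⟨i, hmemB i h⟩ : Fin l) : ℕ), lt_of_lt_of_le hlt hmn⟩, ?_, Fin.ext rfl⟩
    refine Finset.mem_filter.mpr ⟨Finset.mem_univ _, hlt, ?_⟩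
    have heq : Fin.castLE hnl ⟨((ε ⟨i, hmemB i h⟩ : Fin l) : ℕ), lt_of_lt_of_le hlt hmn⟩
        = (ε ⟨i, hmemB i h⟩ : Fin l) := Fin.ext rfl
    rw [heq]
    exact hT'


lemma aux_numeric {N M L SV SE TV TE D a X Y C : ℝ}
    (hNM : M ≤ N) (hNL : N ≤ L) (hN1 : 1 ≤ N) (hN0 : 0 < N)
    (hint : N = L ∨ N + 1 ≤ L)
    (haM : a ≤ M) (ha0 : 0 ≤ a) (hX : 0 ≤ X) (hY : 0 ≤ Y) (hC : X + Y ≤ C)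
    (hD0 : 0 ≤ D) (hDle : D ≤ a * X)
    (hSV : SV ≤ D + (M - a) * X)
    (hTV : TV = D + (N - a) * (C - Y) + (L - N) * C)
    (hSE0 : 0 ≤ SE) (hTE0 : 0 ≤ TE) (hE1 : SE ≤ TE) (hE2 : SE ≤ N * (N - 1) * Y) :
    L * ((N - M) * C + SV + (1/2) * (N - 1)⁻¹ * SE)
      ≤ N * (TV + (1/2) * (L - 1)⁻¹ * TE) + L * (N - M) * Y := by
  have hC0 : 0 ≤ C := le_trans (by linarith) hC
  have hL0 : 0 < L := lt_of_lt_of_le hN0 hNL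
  have hVclear : L * (SV + (N - M) * C) ≤ N * TV + (N^2 - M * L) * Y := by
    have h1 : (0:ℝ) ≤ (L - N) * (a * X - D) := mul_nonneg (by linarith) (by linarith)
    have h2 : (0:ℝ) ≤ (L * M - N * a) * (C - Y - X) := by
      apply mul_nonneg _ (by linarith)
      have k1 : N * a ≤ N * M := mul_le_mul_of_nonneg_left haM hN0.le
      have k2 : N * M ≤ L * M := mul_le_mul_of_nonneg_right hNL (le_trans ha0 haM)
      linarith
    have h3 : L * SV ≤ L * (D + (M - a) * X) := mul_le_mul_of_nonneg_left hSV hL0.le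
    rw [hTV]
    linarith [h1, h2, h3]
  have hEclear : L * ((1/2) * (N - 1)⁻¹ * SE)
      ≤ N * ((1/2) * (L - 1)⁻¹ * TE) + (L * N - N^2) * Y := by
    rcases eq_or_lt_of_le hN1 with h1 | h1
    · have hz : (N - 1)⁻¹ = 0 := by rw [← h1]; simp
      rw [hz]
      have h4 : (0:ℝ) ≤ (L - 1)⁻¹ := inv_nonneg.mpr (by linarith)
      have h5 : (0:ℝ) ≤ L * N - N^2 := by nlinarith [mul_le_mul_of_nonneg_left hNL hN0.le]
      have h6 : (0:ℝ) ≤ N * ((1/2) * (L - 1)⁻¹ * TE) := by positivity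
      have h7 : L * ((1/2) * 0 * SE) = 0 := by ring
      rw [h7]
      have := mul_nonneg h5 hY
      linarith
    · have hN1' : (0:ℝ) < N - 1 := by linarith
      have hL1' : (0:ℝ) < L - 1 := by linarith
      have hLLNN : (0:ℝ) ≤ L * (L - 1) - N * (N - 1) := by nlinarith [mul_le_mul hNL (by linarith : N - 1 ≤ L - 1) (by linarith : (0:ℝ) ≤ N - 1) (by linarith : (0:ℝ) ≤ L)]
      have hfact : (0:ℝ) ≤ (L - N) * (L - N - 1) := by
        rcases hint with h2 | h2
        · rw [h2]; ring_nf; nlinarith [sq_nonneg (L - 1)]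
        · nlinarith [mul_nonneg (by linarith : (0:ℝ) ≤ L - N) (by linarith : (0:ℝ) ≤ L - N - 1)]
      have key : L * (L - 1) * SE
          ≤ N * (N - 1) * TE + 2 * N * (L - N) * (N - 1) * (L - 1) * Y := by
        have ka : (0:ℝ) ≤ N * (N - 1) * (TE - SE) :=
          mul_nonneg (mul_nonneg hN0.le (by linarith)) (by linarith)
        have kb : (0:ℝ) ≤ (L * (L - 1) - N * (N - 1)) * (N * (N - 1) * Y - SE) :=
          mul_nonneg hLLNN (by linarith)
        have kc : (0:ℝ) ≤ N * (N - 1) * Y * ((L - N) * (L - N - 1)) :=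
          mul_nonneg (mul_nonneg (mul_nonneg hN0.le (by linarith)) hY) hfact
        linarith [ka, kb, kc]
      have e1 : L * ((1/2) * (N - 1)⁻¹ * SE)
          = (L * (L - 1) * SE) * (2 * (N - 1) * (L - 1))⁻¹ := by
        field_simp
      have e2 : N * ((1/2) * (L - 1)⁻¹ * TE) + (L * N - N^2) * Y
          = (N * (N - 1) * TE + 2 * N * (L - N) * (N - 1) * (L - 1) * Y)
            * (2 * (N - 1) * (L - 1))⁻¹ := by
        field_simp
      rw [e1, e2]
      exact mul_le_mul_of_nonneg_right key (by positivity)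
  linarith [hVclear, hEclear]


set_option maxHeartbeats 1600000 in
/-- Lemma: extending both graphs with different auxiliary vertices does
not decrease the GOSPA2 distance by more than `C_Y^p·(n−m)/n`. Adjoin `x⋆, x⋆'` to `X`
(in an extension `X'`) with `d(x,x⋆)^p = C₂^p − C_Y^p` and `d(x,x⋆')^p = d(x⋆,x⋆')^p = C₂^p`;
fill up `([m],v,e)` to size `l` with isolated vertices at `x⋆` and `([n],w,f)` to size `l`
with isolated vertices at `x⋆'`. Then
`d_{G,R₂}(([m],v,e),([n],w,f)) ≤ (d_{G,R₂}(([l],v',e'),([l],w',f'))^p + C_Y^p·(n−m)/n)^{1/p}`. -/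
theorem dGOSPA2_fillup_both_bound
    {X X' Y : Type*} [PseudoMetricSpace X] [PseudoMetricSpace X'] [PseudoMetricSpace Y]
    (y₀ : Y) (p C₂ CX CY : ℝ) (hp : 1 ≤ p)
    (hpY : p = 1 ∨ (1 < p ∧ ∀ y₁ y₂ : Y, dist y₁ y₂ ≤ max (dist y₁ y₀) (dist y₀ y₂)))
    (hCX0 : 0 ≤ CX) (hCY0 : 0 ≤ CY)
    (hdX : ∀ x x' : X, dist x x' ≤ CX) (hdY : ∀ y y' : Y, dist y y' ≤ CY)
    (hC₂ : CX ^ p + CY ^ p ≤ C₂ ^ p)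
    {m n l : ℕ} (hmn : m ≤ n) (hnl : n ≤ l) (hn : 1 ≤ n)
    (v : Fin m → X) (e : Fin m → Fin m → Y)
    (w : Fin n → X) (f : Fin n → Fin n → Y)
    (he : IsGraph y₀ e) (hf : IsGraph y₀ f)
    (ιX : X → X') (hιX : ∀ x x', dist (ιX x) (ιX x') = dist x x')
    (xstar xstar' : X')
    (hxstar : ∀ x, dist (ιX x) xstar ^ p = C₂ ^ p - CY ^ p)
    (hxstar' : ∀ x, dist (ιX x) xstar' ^ p = C₂ ^ p)
    (hstars : dist xstar xstar' ^ p = C₂ ^ p)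
    (v' : Fin l → X')
    (hv' : ∀ i : Fin l, v' i = if h : (i : ℕ) < m then ιX (v ⟨i.1, h⟩) else xstar)
    (e' : Fin l → Fin l → Y)
    (he' : ∀ i i' : Fin l, e' i i' =
      if h : (i : ℕ) < m ∧ (i' : ℕ) < m then e ⟨i.1, h.1⟩ ⟨i'.1, h.2⟩ else y₀)
    (w' : Fin l → X')
    (hw' : ∀ j : Fin l, w' j = if h : (j : ℕ) < n then ιX (w ⟨j.1, h⟩) else xstar')
    (f' : Fin l → Fin l → Y)
    (hf' : ∀ j j' : Fin l, f' j j' =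
      if h : (j : ℕ) < n ∧ (j' : ℕ) < n then f ⟨j.1, h.1⟩ ⟨j'.1, h.2⟩ else y₀) :
    dGOSPA2 y₀ p C₂ hmn v e w f ≤
      (dGOSPA2 y₀ p C₂ (le_refl l) v' e' w' f' ^ p
        + CY ^ p * ((n : ℝ) - (m : ℝ)) / (n : ℝ)) ^ (1/p) := by
  classical
  have hp0 : 0 < p := lt_of_lt_of_le one_pos hp
  have hp0' : p ≠ 0 := ne_of_gt hp0
  have hq0 : 0 < 1/p := by positivity
  have hl1 : 1 ≤ l := le_trans hn hnl
  have hN0 : (0:ℝ) < n := by exact_mod_cast hn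
  have hL0 : (0:ℝ) < l := by exact_mod_cast hl1
  have hNM : (m:ℝ) ≤ (n:ℝ) := by exact_mod_cast hmn
  have hNL : (n:ℝ) ≤ (l:ℝ) := by exact_mod_cast hnl
  have hN1 : (1:ℝ) ≤ (n:ℝ) := by exact_mod_cast hn
  have hL1 : (1:ℝ) ≤ (l:ℝ) := by exact_mod_cast hl1
  have hXp : (0:ℝ) ≤ CX ^ p := Real.rpow_nonneg hCX0 p
  have hYp : (0:ℝ) ≤ CY ^ p := Real.rpow_nonneg hCY0 p
  have hC2p : (0:ℝ) ≤ C₂ ^ p := le_trans (by linarith) hC₂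
  have htri : ∀ y₁ y₂ : Y, dist y₁ y₂ ^ p ≤ dist y₁ y₀ ^ p + dist y₀ y₂ ^ p := by
    intro y₁ y₂
    rcases hpY with h1 | ⟨-, hY⟩
    · subst h1
      simp only [Real.rpow_one]
      exact dist_triangle y₁ y₀ y₂
    · refine le_trans (Real.rpow_le_rpow dist_nonneg (hY y₁ y₂) hp0.le) ?_
      rcases le_total (dist y₁ y₀) (dist y₀ y₂) with h3 | h3
      · rw [max_eq_right h3]
        have := Real.rpow_nonneg (dist_nonneg : 0 ≤ dist y₁ y₀) p
        linarith
      · rw [max_eq_left h3]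
        have := Real.rpow_nonneg (dist_nonneg : 0 ≤ dist y₀ y₂) p
        linarith
  have hdYp : ∀ y y' : Y, dist y y' ^ p ≤ CY ^ p := fun y y' =>
    Real.rpow_le_rpow dist_nonneg (hdY y y') hp0.le
  -- optimal permutation for the filled-up graphs
  obtain ⟨π', -, hinfG⟩ := Finset.exists_mem_eq_inf' (Finset.univ_nonempty)
    (fun π : Equiv.Perm (Fin l) =>
      (((l : ℝ) - (l : ℝ)) * C₂ ^ p
        + ∑ i : Fin l, dist (v' i) (w' (π (Fin.castLE (le_refl l) i))) ^ p
        + (1/2) * ((l : ℝ) - 1)⁻¹ *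
            ∑ i : Fin l, ∑ i' : Fin l,
              (if h : (i : ℕ) < l ∧ (i' : ℕ) < l
               then dist (e' ⟨i.1, h.1⟩ ⟨i'.1, h.2⟩) (f' (π i) (π i')) ^ p
               else dist y₀ (f' (π i) (π i')) ^ p)) ^ (1/p))
  obtain ⟨σ, hσinj, hσT, hσA, hσm⟩ := aux_exists_sigma hmn hnl π'
  -- the corresponding permutation of [n]
  have hπex : ∃ π : Equiv.Perm (Fin n), ∀ i : Fin n, ((π i : Fin n) : ℕ) = ((π' (σ i)) : ℕ) := by
    have hinj : Function.Injective (fun i : Fin n => (⟨((π' (σ i)) : ℕ), hσT i⟩ : Fin n)) := by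
      intro i i' h
      dsimp only at h
      simp only [Fin.mk.injEq] at h
      exact hσinj (π'.injective (Fin.ext h))
    exact ⟨Equiv.ofBijective _ (Finite.injective_iff_bijective.mp hinj), fun i => rfl⟩
  obtain ⟨π, hπval⟩ := hπex
  have hπσ : ∀ i : Fin n, π' (σ i) = Fin.castLE hnl (π i) := by
    intro i
    apply Fin.ext
    rw [Fin.coe_castLE]
    exact (hπval i).symm
  -- abbreviations for the four sums
  set SV := ∑ i : Fin m, dist (v i) (w (π (Fin.castLE hmn i))) ^ p with hSVdef
  set SE := ∑ i : Fin n, ∑ i' : Fin n,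
      (if h : (i : ℕ) < m ∧ (i' : ℕ) < m
       then dist (e ⟨i.1, h.1⟩ ⟨i'.1, h.2⟩) (f (π i) (π i')) ^ p
       else dist y₀ (f (π i) (π i')) ^ p) with hSEdef
  set TV := ∑ j : Fin l, dist (v' j) (w' (π' j)) ^ p with hTVdef
  set TE := ∑ j : Fin l, ∑ j' : Fin l, dist (e' j j') (f' (π' j) (π' j')) ^ p with hTEdef
  have hSV0 : 0 ≤ SV := Finset.sum_nonneg fun _ _ => Real.rpow_nonneg dist_nonneg _
  have hSE0 : 0 ≤ SE := by
    apply Finset.sum_nonneg; intro i _; apply Finset.sum_nonneg; intro i' _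
    split <;> exact Real.rpow_nonneg dist_nonneg _
  have hTV0 : 0 ≤ TV := Finset.sum_nonneg fun _ _ => Real.rpow_nonneg dist_nonneg _
  have hTE0 : 0 ≤ TE := Finset.sum_nonneg fun _ _ =>
    Finset.sum_nonneg fun _ _ => Real.rpow_nonneg dist_nonneg _
  -- the matched set
  set Am : Finset (Fin m) :=
    Finset.univ.filter (fun i => ((π' (Fin.castLE (le_trans hmn hnl) i)):ℕ) < n) with hAmdef
  set D := ∑ i ∈ Am, dist (v i) (w (π (Fin.castLE hmn i))) ^ p with hDdef
  have hD0 : 0 ≤ D := Finset.sum_nonneg fun _ _ => Real.rpow_nonneg dist_nonneg _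
  have haM : (Am.card:ℝ) ≤ (m:ℝ) := by
    have := Finset.card_filter_le Finset.univ
      (fun i : Fin m => ((π' (Fin.castLE (le_trans hmn hnl) i)):ℕ) < n)
    rw [Finset.card_univ, Fintype.card_fin] at this
    exact_mod_cast this
  have hDle : D ≤ (Am.card:ℝ) * CX ^ p := by
    rw [hDdef]
    calc ∑ i ∈ Am, dist (v i) (w (π (Fin.castLE hmn i))) ^ p
        ≤ Am.card • CX ^ p := Finset.sum_le_card_nsmul _ _ _
          (fun i _ => Real.rpow_le_rpow dist_nonneg (hdX _ _) hp0.le)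
      _ = (Am.card:ℝ) * CX ^ p := nsmul_eq_mul _ _
  have hAmcardNat : Am.card ≤ m := by
    calc Am.card ≤ (Finset.univ : Finset (Fin m)).card := Finset.card_filter_le _ _
      _ = m := by rw [Finset.card_univ, Fintype.card_fin]
  have hSVle : SV ≤ D + ((m:ℝ) - Am.card) * CX ^ p := by
    set Bm : Finset (Fin m) := Finset.univ.filter
      (fun i : Fin m => ¬ (((π' (Fin.castLE (le_trans hmn hnl) i)):ℕ) < n)) with hBmdef
    have hsplit := Finset.sum_filter_add_sum_filter_not (Finset.univ : Finset (Fin m))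
      (fun i : Fin m => ((π' (Fin.castLE (le_trans hmn hnl) i)):ℕ) < n)
      (fun i : Fin m => dist (v i) (w (π (Fin.castLE hmn i))) ^ p)
    rw [← hAmdef, ← hBmdef, ← hDdef, ← hSVdef] at hsplit
    have hcc := Finset.card_filter_add_card_filter_not
      (s := (Finset.univ : Finset (Fin m)))
      (p := fun i : Fin m => ((π' (Fin.castLE (le_trans hmn hnl) i)):ℕ) < n)
    rw [← hAmdef, ← hBmdef, Finset.card_univ, Fintype.card_fin] at hcc
    have hb : ∑ i ∈ Bm, dist (v i) (w (π (Fin.castLE hmn i))) ^ p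
        ≤ ((m:ℝ) - Am.card) * CX ^ p := by
      have hb1 : ∑ i ∈ Bm, dist (v i) (w (π (Fin.castLE hmn i))) ^ p ≤ Bm.card • CX ^ p :=
        Finset.sum_le_card_nsmul _ _ _
          (fun i _ => Real.rpow_le_rpow dist_nonneg (hdX _ _) hp0.le)
      rw [nsmul_eq_mul] at hb1
      refine le_trans hb1 (mul_le_mul_of_nonneg_right ?_ hXp)
      have hc2 : Bm.card = m - Am.card := by omega
      rw [hc2, Nat.cast_sub hAmcardNat]
    linarith [hsplit, hb]
  have hTVeq : TV = D + ((n:ℝ) - Am.card) * (C₂ ^ p - CY ^ p) + ((l:ℝ) - n) * C₂ ^ p := by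
    set T : Finset (Fin l) := Finset.univ.filter (fun j => ((π' j):ℕ) < n) with hTdef
    set A' : Finset (Fin l) := Am.image (Fin.castLE (le_trans hmn hnl)) with hA'def
    have hA'T : A' ⊆ T := by
      intro j hj
      rw [hA'def, Finset.mem_image] at hj
      obtain ⟨i, hi, rfl⟩ := hj
      exact Finset.mem_filter.mpr ⟨Finset.mem_univ _, (Finset.mem_filter.mp hi).2⟩
    have hcT : T.card = n := aux_card_filter_perm hnl π'
    have hcA' : A'.card = Am.card := by
      rw [hA'def, Finset.card_image_of_injective _ (Fin.castLE_injective _)]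
    -- split off the complement of T
    set g : Fin l → ℝ := fun j => dist (v' j) (w' (π' j)) ^ p with hgdef
    have h1 := Finset.sum_filter_add_sum_filter_not (Finset.univ : Finset (Fin l))
      (fun j => ((π' j):ℕ) < n) g
    rw [← hTdef] at h1
    -- values outside T
    have h4 : ∀ j ∈ Finset.univ.filter (fun j : Fin l => ¬ (((π' j):ℕ) < n)), g j = C₂ ^ p := by
      intro j hj
      have hπj : ¬ (((π' j):ℕ) < n) := (Finset.mem_filter.mp hj).2
      rw [hgdef]
      dsimp only
      rw [hw' (π' j), dif_neg hπj]
      by_cases hjm : (j:ℕ) < m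
      · rw [hv' j, dif_pos hjm, hxstar']
      · rw [hv' j, dif_neg hjm, hstars]
    have h4' : ∑ j ∈ Finset.univ.filter (fun j : Fin l => ¬ (((π' j):ℕ) < n)), g j
        = ((l:ℝ) - n) * C₂ ^ p := by
      rw [Finset.sum_congr rfl h4, Finset.sum_const, nsmul_eq_mul]
      congr 1
      have hcc := Finset.card_filter_add_card_filter_not
        (s := (Finset.univ : Finset (Fin l))) (p := fun j : Fin l => ((π' j):ℕ) < n)
      rw [← hTdef, hcT, Finset.card_univ, Fintype.card_fin] at hcc
      have : (Finset.univ.filter (fun j : Fin l => ¬ (((π' j):ℕ) < n))).card = l - n := by omega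
      rw [this, Nat.cast_sub hnl]
    -- split T into A' and T \ A'
    have h2 := Finset.sum_sdiff (f := g) hA'T
    -- values on T \ A'
    have h3 : ∀ j ∈ T \ A', g j = C₂ ^ p - CY ^ p := by
      intro j hj
      obtain ⟨hjT, hjA⟩ := Finset.mem_sdiff.mp hj
      have hπj : ((π' j):ℕ) < n := (Finset.mem_filter.mp hjT).2
      have hjm : ¬ ((j:ℕ) < m) := by
        intro hjm
        apply hjA
        rw [hA'def]
        refine Finset.mem_image.mpr ⟨⟨j.1, hjm⟩, ?_, Fin.ext rfl⟩
        refine Finset.mem_filter.mpr ⟨Finset.mem_univ _, ?_⟩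
        have hcc : Fin.castLE (le_trans hmn hnl) (⟨j.1, hjm⟩ : Fin m) = j := Fin.ext rfl
        rw [hcc]
        exact hπj
      rw [hgdef]
      dsimp only
      rw [hv' j, dif_neg hjm, hw' (π' j), dif_pos hπj, dist_comm, hxstar]
    have h3' : ∑ j ∈ T \ A', g j = ((n:ℝ) - Am.card) * (C₂ ^ p - CY ^ p) := by
      rw [Finset.sum_congr rfl h3, Finset.sum_const, nsmul_eq_mul]
      congr 1
      rw [Finset.card_sdiff_of_subset hA'T, hcT, hcA', Nat.cast_sub (le_trans hAmcardNat hmn)]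
    -- the sum over A' is D
    have h5 : ∑ j ∈ A', g j = D := by
      rw [hA'def, Finset.sum_image
        (fun x _ y _ hxy => Fin.castLE_injective _ hxy), hDdef]
      apply Finset.sum_congr rfl
      intro i hi
      have hin : ((π' (Fin.castLE (le_trans hmn hnl) i)):ℕ) < n := (Finset.mem_filter.mp hi).2
      have him : ((Fin.castLE (le_trans hmn hnl) i : Fin l) : ℕ) < m := i.isLt
      rw [hgdef]
      dsimp only
      rw [hv' _, dif_pos him, hw' _, dif_pos hin]
      have hσi : σ (Fin.castLE hmn i) = Fin.castLE hnl (Fin.castLE hmn i) := by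
        apply hσA
        refine ⟨i.isLt, ?_⟩
        have hcc : Fin.castLE hnl (Fin.castLE hmn i) = Fin.castLE (le_trans hmn hnl) i :=
          Fin.ext rfl
        rw [hcc]
        exact hin
      have hveq : v ⟨((Fin.castLE (le_trans hmn hnl) i : Fin l) : ℕ), him⟩ = v i := rfl
      have hweq : w ⟨((π' (Fin.castLE (le_trans hmn hnl) i)):ℕ), hin⟩
          = w (π (Fin.castLE hmn i)) := by
        congr 1
        apply Fin.ext
        rw [hπval, hσi]
        have hcc : Fin.castLE hnl (Fin.castLE hmn i) = Fin.castLE (le_trans hmn hnl) i :=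
          Fin.ext rfl
        rw [hcc]
      rw [hveq, hweq, hιX]
    -- assemble
    have hTVsum : TV = ∑ j ∈ T, g j + ∑ j ∈ Finset.univ.filter
        (fun j : Fin l => ¬ (((π' j):ℕ) < n)), g j := by
      rw [h1, hTVdef, hgdef]
    rw [hTVsum, ← h2, h3', h5, h4']
    ring
  have haN : (Am.card:ℝ) ≤ (n:ℝ) := le_trans haM hNM
  have hE1 : SE ≤ TE := by
    set F : Fin n × Fin n → ℝ := fun q =>
      if h : (q.1 : ℕ) < m ∧ (q.2 : ℕ) < m
      then dist (e ⟨q.1.1, h.1⟩ ⟨q.2.1, h.2⟩) (f (π q.1) (π q.2)) ^ p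
      else dist y₀ (f (π q.1) (π q.2)) ^ p with hFdef
    set Gt : Fin l × Fin l → ℝ :=
      fun r => dist (e' r.1 r.2) (f' (π' r.1) (π' r.2)) ^ p with hGtdef
    have hGt0 : ∀ r : Fin l × Fin l, 0 ≤ Gt r := fun r => Real.rpow_nonneg dist_nonneg _
    have hSEexp : SE = ∑ q : Fin n × Fin n, F q := by
      rw [hSEdef, Fintype.sum_prod_type]
    have hTEexp : TE = ∑ r : Fin l × Fin l, Gt r := by
      rw [hTEdef, Fintype.sum_prod_type]
    set PM : Fin n × Fin n → Prop := fun q =>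
      ((q.1 : ℕ) < m ∧ (q.2 : ℕ) < m) ∧
        ¬(((q.1 : ℕ) < m ∧ ((π' (Fin.castLE hnl q.1)) : ℕ) < n) ∧
          ((q.2 : ℕ) < m ∧ ((π' (Fin.castLE hnl q.2)) : ℕ) < n)) with hPMdef
    set X2 : Fin n × Fin n → ℝ := fun q =>
      if PM q then dist (e' (Fin.castLE hnl q.1) (Fin.castLE hnl q.2)) y₀ ^ p else 0 with hX2def
    have hfπ : ∀ i i' : Fin n, f' (π' (σ i)) (π' (σ i')) = f (π i) (π i') := by
      intro i i'
      have h1 : (⟨((π' (σ i)) : ℕ), hσT i⟩ : Fin n) = π i := Fin.ext (hπval i).symm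
      have h2 : (⟨((π' (σ i')) : ℕ), hσT i'⟩ : Fin n) = π i' := Fin.ext (hπval i').symm
      calc f' (π' (σ i)) (π' (σ i'))
          = f ⟨((π' (σ i)) : ℕ), hσT i⟩ ⟨((π' (σ i')) : ℕ), hσT i'⟩ := by
            rw [hf']
            exact dif_pos ⟨hσT i, hσT i'⟩
        _ = f (π i) (π i') := by rw [h1, h2]
    have hσout : ∀ i i' : Fin n,
        ¬(((i : ℕ) < m ∧ ((π' (Fin.castLE hnl i)) : ℕ) < n) ∧
          ((i' : ℕ) < m ∧ ((π' (Fin.castLE hnl i')) : ℕ) < n)) → e' (σ i) (σ i') = y₀ := by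
      intro i i' hno
      rw [he']
      rcases not_and_or.mp hno with h1 | h1
      · exact dif_neg (fun hc => absurd hc.1 (not_lt.mpr (hσm i h1)))
      · exact dif_neg (fun hc => absurd hc.2 (not_lt.mpr (hσm i' h1)))
    have hpt : ∀ q : Fin n × Fin n, F q ≤ Gt (σ q.1, σ q.2) + X2 q := by
      rintro ⟨i, i'⟩
      rw [hFdef, hGtdef, hX2def]
      dsimp only
      by_cases hm2 : (i : ℕ) < m ∧ (i' : ℕ) < m
      · by_cases hA2 : ((i : ℕ) < m ∧ ((π' (Fin.castLE hnl i)) : ℕ) < n) ∧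
            ((i' : ℕ) < m ∧ ((π' (Fin.castLE hnl i')) : ℕ) < n)
        · rw [dif_pos hm2, if_neg (fun hc => hc.2 hA2)]
          have hσ1 : σ i = Fin.castLE hnl i := hσA i hA2.1
          have hσ2 : σ i' = Fin.castLE hnl i' := hσA i' hA2.2
          have heq : e' (σ i) (σ i') = e ⟨i.1, hm2.1⟩ ⟨i'.1, hm2.2⟩ := by
            rw [hσ1, hσ2, he']
            exact dif_pos ⟨hm2.1, hm2.2⟩
          rw [heq, hfπ i i']
          simp
        · rw [dif_pos hm2, if_pos ⟨hm2, hA2⟩, hσout i i' hA2, hfπ i i']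
          have heq2 : e' (Fin.castLE hnl i) (Fin.castLE hnl i')
              = e ⟨i.1, hm2.1⟩ ⟨i'.1, hm2.2⟩ := by
            rw [he']
            exact dif_pos ⟨hm2.1, hm2.2⟩
          rw [heq2]
          have := htri (e ⟨i.1, hm2.1⟩ ⟨i'.1, hm2.2⟩) (f (π i) (π i'))
          linarith
      · rw [dif_neg hm2, if_neg (fun hc => hm2 hc.1)]
        have hno : ¬(((i : ℕ) < m ∧ ((π' (Fin.castLE hnl i)) : ℕ) < n) ∧
            ((i' : ℕ) < m ∧ ((π' (Fin.castLE hnl i')) : ℕ) < n)) := by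
          intro hc
          exact hm2 ⟨hc.1.1, hc.2.1⟩
        rw [hσout i i' hno, hfπ i i']
        simp
    set P1 : Finset (Fin l × Fin l) :=
      (Finset.univ : Finset (Fin n × Fin n)).image (fun q => (σ q.1, σ q.2)) with hP1def
    set P2 : Finset (Fin l × Fin l) :=
      (Finset.univ.filter PM).image
        (fun q : Fin n × Fin n => (Fin.castLE hnl q.1, Fin.castLE hnl q.2)) with hP2def
    have hinj1 : ∀ x ∈ (Finset.univ : Finset (Fin n × Fin n)), ∀ y ∈ Finset.univ,
        (fun q : Fin n × Fin n => (σ q.1, σ q.2)) x = (fun q => (σ q.1, σ q.2)) y → x = y := by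
      intro x _ y _ hxy
      dsimp only at hxy
      exact Prod.ext (hσinj (congrArg Prod.fst hxy)) (hσinj (congrArg Prod.snd hxy))
    have hinj2 : ∀ x ∈ Finset.univ.filter PM, ∀ y ∈ Finset.univ.filter PM,
        (fun q : Fin n × Fin n => (Fin.castLE hnl q.1, Fin.castLE hnl q.2)) x
          = (fun q : Fin n × Fin n => (Fin.castLE hnl q.1, Fin.castLE hnl q.2)) y → x = y := by
      intro x _ y _ hxy
      dsimp only at hxy
      exact Prod.ext (Fin.castLE_injective hnl (congrArg Prod.fst hxy))
        (Fin.castLE_injective hnl (congrArg Prod.snd hxy))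
    have hsum1 : ∑ q : Fin n × Fin n, Gt (σ q.1, σ q.2) = ∑ r ∈ P1, Gt r := by
      rw [hP1def, Finset.sum_image hinj1]
    have hX2G : ∀ q ∈ Finset.univ.filter PM,
        dist (e' (Fin.castLE hnl q.1) (Fin.castLE hnl q.2)) y₀ ^ p
          = Gt (Fin.castLE hnl q.1, Fin.castLE hnl q.2) := by
      intro q hq
      have hPMq : PM q := (Finset.mem_filter.mp hq).2
      rw [hPMdef] at hPMq
      rw [hGtdef]
      dsimp only
      have hy : f' (π' (Fin.castLE hnl q.1)) (π' (Fin.castLE hnl q.2)) = y₀ := by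
        rw [hf']
        rcases not_and_or.mp hPMq.2 with h1 | h1
        · have h3 : ¬ ((π' (Fin.castLE hnl q.1)) : ℕ) < n := fun hc => h1 ⟨hPMq.1.1, hc⟩
          exact dif_neg (fun hc => h3 hc.1)
        · have h3 : ¬ ((π' (Fin.castLE hnl q.2)) : ℕ) < n := fun hc => h1 ⟨hPMq.1.2, hc⟩
          exact dif_neg (fun hc => h3 hc.2)
      rw [hy]
    have hsum2 : ∑ q : Fin n × Fin n, X2 q = ∑ r ∈ P2, Gt r := by
      rw [hP2def, Finset.sum_image hinj2, hX2def]
      rw [← Finset.sum_congr rfl hX2G, ← Finset.sum_filter]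
    have hdisj : Disjoint P1 P2 := by
      rw [Finset.disjoint_left]
      intro r hr1 hr2
      rw [hP1def, Finset.mem_image] at hr1
      obtain ⟨q, -, rfl⟩ := hr1
      rw [hP2def, Finset.mem_image] at hr2
      obtain ⟨q2, hq2, heq⟩ := hr2
      have hPMq2 : PM q2 := (Finset.mem_filter.mp hq2).2
      rw [hPMdef] at hPMq2
      have h1 : σ q.1 = Fin.castLE hnl q2.1 := (congrArg Prod.fst heq).symm
      have h2 : σ q.2 = Fin.castLE hnl q2.2 := (congrArg Prod.snd heq).symm
      rcases not_and_or.mp hPMq2.2 with h3 | h3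
      · have h4 : ¬ ((π' (Fin.castLE hnl q2.1)) : ℕ) < n := fun hc => h3 ⟨hPMq2.1.1, hc⟩
        exact h4 (h1 ▸ hσT q.1)
      · have h4 : ¬ ((π' (Fin.castLE hnl q2.2)) : ℕ) < n := fun hc => h3 ⟨hPMq2.1.2, hc⟩
        exact h4 (h2 ▸ hσT q.2)
    calc SE = ∑ q : Fin n × Fin n, F q := hSEexp
      _ ≤ ∑ q : Fin n × Fin n, (Gt (σ q.1, σ q.2) + X2 q) :=
          Finset.sum_le_sum (fun q _ => hpt q)
      _ = ∑ q : Fin n × Fin n, Gt (σ q.1, σ q.2) + ∑ q : Fin n × Fin n, X2 q :=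
          Finset.sum_add_distrib
      _ = ∑ r ∈ P1, Gt r + ∑ r ∈ P2, Gt r := by rw [hsum1, hsum2]
      _ = ∑ r ∈ P1 ∪ P2, Gt r := (Finset.sum_union hdisj).symm
      _ ≤ ∑ r : Fin l × Fin l, Gt r := Finset.sum_le_sum_of_subset_of_nonneg
          (Finset.subset_univ _) (fun r _ _ => hGt0 r)
      _ = TE := hTEexp.symm
  have hE2 : SE ≤ (n:ℝ) * ((n:ℝ)-1) * CY ^ p := by
    set F : Fin n × Fin n → ℝ := fun q =>
      if h : (q.1 : ℕ) < m ∧ (q.2 : ℕ) < m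
      then dist (e ⟨q.1.1, h.1⟩ ⟨q.2.1, h.2⟩) (f (π q.1) (π q.2)) ^ p
      else dist y₀ (f (π q.1) (π q.2)) ^ p with hFdef
    have hSEexp : SE = ∑ q : Fin n × Fin n, F q := by
      rw [hSEdef, Fintype.sum_prod_type]
    have hFdiag : ∀ q : Fin n × Fin n, q.1 = q.2 → F q = 0 := by
      rintro ⟨i1, i2⟩ hq
      dsimp only at hq
      subst hq
      rw [hFdef]
      dsimp only
      by_cases hc : (i1 : ℕ) < m ∧ (i1 : ℕ) < m
      · rw [dif_pos hc, he.2, hf.2, dist_self, Real.zero_rpow hp0']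
      · rw [dif_neg hc, hf.2, dist_self, Real.zero_rpow hp0']
    have hFb : ∀ q : Fin n × Fin n, F q ≤ CY ^ p := by
      intro q
      rw [hFdef]
      dsimp only
      split <;> exact hdYp _ _
    have hsplit := Finset.sum_filter_add_sum_filter_not
      (Finset.univ : Finset (Fin n × Fin n)) (fun q => q.1 = q.2) F
    have hz : ∑ q ∈ Finset.univ.filter (fun q : Fin n × Fin n => q.1 = q.2), F q = 0 :=
      Finset.sum_eq_zero (fun q hq => hFdiag q (Finset.mem_filter.mp hq).2)
    have hcdiag : (Finset.univ.filter (fun q : Fin n × Fin n => q.1 = q.2)).card = n := by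
      have himg : Finset.univ.filter (fun q : Fin n × Fin n => q.1 = q.2)
          = Finset.univ.image (fun i : Fin n => (i, i)) := by
        ext q
        simp only [Finset.mem_filter, Finset.mem_univ, true_and, Finset.mem_image]
        constructor
        · intro h
          exact ⟨q.1, Prod.ext rfl h⟩
        · rintro ⟨i, rfl⟩
          rfl
      rw [himg, Finset.card_image_of_injective _
        (fun a b hab => (Prod.ext_iff.mp hab).1), Finset.card_univ, Fintype.card_fin]
    have hcne : (Finset.univ.filter (fun q : Fin n × Fin n => ¬ q.1 = q.2)).card = n*n - n := by
      have hcc := Finset.card_filter_add_card_filter_not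
        (s := (Finset.univ : Finset (Fin n × Fin n))) (p := fun q => q.1 = q.2)
      rw [hcdiag, Finset.card_univ, Fintype.card_prod, Fintype.card_fin] at hcc
      omega
    have hb : ∑ q ∈ Finset.univ.filter (fun q : Fin n × Fin n => ¬ q.1 = q.2), F q
        ≤ (n:ℝ) * ((n:ℝ)-1) * CY ^ p := by
      have hb1 := Finset.sum_le_card_nsmul
        (Finset.univ.filter (fun q : Fin n × Fin n => ¬ q.1 = q.2)) F (CY ^ p)
        (fun q _ => hFb q)
      rw [nsmul_eq_mul, hcne] at hb1
      refine le_trans hb1 (mul_le_mul_of_nonneg_right ?_ hYp)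
      have hnn : n ≤ n * n := Nat.le_mul_of_pos_left n hn
      rw [Nat.cast_sub hnn]
      push_cast
      nlinarith [hN1]
    rw [hSEexp, ← hsplit, hz, zero_add]
    exact hb
  have hintNL : (n:ℝ) = (l:ℝ) ∨ (n:ℝ) + 1 ≤ (l:ℝ) := by
    rcases eq_or_lt_of_le hnl with h2 | h2
    · left; exact_mod_cast h2
    · right; exact_mod_cast h2
  have hMain : (l:ℝ) * (((n:ℝ)-(m:ℝ))*C₂^p + SV + (1/2)*((n:ℝ)-1)⁻¹*SE)
      ≤ (n:ℝ) * (TV + (1/2)*((l:ℝ)-1)⁻¹*TE) + (l:ℝ)*((n:ℝ)-(m:ℝ))*CY^p :=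
    aux_numeric hNM hNL hN1 hN0 hintNL haM (Nat.cast_nonneg _) hXp hYp hC₂ hD0 hDle hSVle hTVeq hSE0 hTE0 hE1 hE2
  have hinvN1 : (0:ℝ) ≤ ((n:ℝ)-1)⁻¹ := inv_nonneg.mpr (by linarith)
  have hinvL1 : (0:ℝ) ≤ ((l:ℝ)-1)⁻¹ := inv_nonneg.mpr (by linarith)
  have hFB0 : 0 ≤ ((n:ℝ)-(m:ℝ))*C₂^p + SV + (1/2)*((n:ℝ)-1)⁻¹*SE := by
    have := mul_nonneg (mul_nonneg (by norm_num : (0:ℝ) ≤ 1/2) hinvN1) hSE0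
    have := mul_nonneg (by linarith : (0:ℝ) ≤ (n:ℝ)-(m:ℝ)) hC2p
    linarith
  have hGB0 : 0 ≤ TV + (1/2)*((l:ℝ)-1)⁻¹*TE := by
    have := mul_nonneg (mul_nonneg (by norm_num : (0:ℝ) ≤ 1/2) hinvL1) hTE0
    linarith
  have hcompare : (((n:ℝ)-(m:ℝ))*C₂^p + SV + (1/2)*((n:ℝ)-1)⁻¹*SE) / (n:ℝ)
      ≤ (TV + (1/2)*((l:ℝ)-1)⁻¹*TE) / (l:ℝ) + CY^p * ((n:ℝ)-(m:ℝ)) / (n:ℝ) := by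
    have e3 : (TV + (1/2)*((l:ℝ)-1)⁻¹*TE) / (l:ℝ) + CY^p * ((n:ℝ)-(m:ℝ)) / (n:ℝ)
        = ((n:ℝ) * (TV + (1/2)*((l:ℝ)-1)⁻¹*TE) + (l:ℝ)*((n:ℝ)-(m:ℝ))*CY^p) / ((l:ℝ)*(n:ℝ)) := by
      field_simp
    have e4 : (((n:ℝ)-(m:ℝ))*C₂^p + SV + (1/2)*((n:ℝ)-1)⁻¹*SE) / (n:ℝ)
        = ((l:ℝ) * (((n:ℝ)-(m:ℝ))*C₂^p + SV + (1/2)*((n:ℝ)-1)⁻¹*SE)) / ((l:ℝ)*(n:ℝ)) := by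
      rw [mul_div_mul_left _ _ (ne_of_gt hL0)]
    rw [e3, e4]
    exact (div_le_div_iff_of_pos_right (by positivity)).mpr hMain
  have hGval : dGOSPA2 y₀ p C₂ (le_refl l) v' e' w' f'
      = ((TV + (1/2)*((l:ℝ)-1)⁻¹*TE) / (l:ℝ)) ^ (1/p) := by
    have hbr : (((l : ℝ) - (l : ℝ)) * C₂ ^ p
        + ∑ i : Fin l, dist (v' i) (w' (π' (Fin.castLE (le_refl l) i))) ^ p
        + (1/2) * ((l : ℝ) - 1)⁻¹ *
            ∑ i : Fin l, ∑ i' : Fin l,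
              (if h : (i : ℕ) < l ∧ (i' : ℕ) < l
               then dist (e' ⟨i.1, h.1⟩ ⟨i'.1, h.2⟩) (f' (π' i) (π' i')) ^ p
               else dist y₀ (f' (π' i) (π' i')) ^ p))
        = TV + (1/2)*((l:ℝ)-1)⁻¹*TE := by
      rw [sub_self, zero_mul, zero_add]
      congr 1
      · congr 1
        rw [hTEdef]
        apply Finset.sum_congr rfl
        intro j _
        apply Finset.sum_congr rfl
        intro j' _
        rw [dif_pos (show (j:ℕ) < l ∧ (j':ℕ) < l from ⟨j.isLt, j'.isLt⟩)]
    simp only [dGOSPA2]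
    rw [hinfG, hbr, Real.div_rpow hGB0 (Nat.cast_nonneg l), inv_mul_eq_div]
  calc dGOSPA2 y₀ p C₂ hmn v e w f
      ≤ (((n:ℝ)) ^ (1/p))⁻¹ * ((((n:ℝ)-(m:ℝ))*C₂^p + SV + (1/2)*((n:ℝ)-1)⁻¹*SE) ^ (1/p)) := by
        simp only [dGOSPA2]
        refine mul_le_mul_of_nonneg_left ?_ (inv_nonneg.mpr (Real.rpow_nonneg (Nat.cast_nonneg n) _))
        exact Finset.inf'_le _ (Finset.mem_univ π)
    _ = ((((n:ℝ)-(m:ℝ))*C₂^p + SV + (1/2)*((n:ℝ)-1)⁻¹*SE) / (n:ℝ)) ^ (1/p) := by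
        rw [Real.div_rpow hFB0 (Nat.cast_nonneg n), inv_mul_eq_div]
    _ ≤ ((TV + (1/2)*((l:ℝ)-1)⁻¹*TE) / (l:ℝ) + CY^p * ((n:ℝ)-(m:ℝ)) / (n:ℝ)) ^ (1/p) :=
        Real.rpow_le_rpow (div_nonneg hFB0 (Nat.cast_nonneg n)) hcompare hq0.le
    _ = (dGOSPA2 y₀ p C₂ (le_refl l) v' e' w' f' ^ p
        + CY ^ p * ((n : ℝ) - (m : ℝ)) / (n : ℝ)) ^ (1/p) := by
        rw [hGval, ← Real.rpow_mul (div_nonneg hGB0 (Nat.cast_nonneg l)),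
          one_div_mul_cancel hp0', Real.rpow_one]
end
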